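/- arXiv:2506.13025 — 10 statements merged into one kernel-verified Lean document; each statement's English description precedes it below -/
import Mathlib

section
/- Let (ε_X, ε_A, ε_Y, ε_R) be mutually independent random elements on a probability space, taking values in standard Borel spaces, and let f_X, f_A, f_Y, f_R be measurable functions. Define X = f_X(ε_X), A¹ = f_A(X, ε_A), and, for a fixed treatment value a, define the counterfactuals Y^a = f_Y(X, a, ε_Y) and R^a = f_R(X, Y^a, ε_R). Then, conditionally on the sigma-algebra generated by X, the random variable A¹ is independent of the pair (Y^a, R^a). -/
open MeasureTheory ProbabilityTheory

lemma condexp_comap_eq_integral_map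
    {Ω α γ : Type*} [mΩ : MeasurableSpace Ω]
    {mα : MeasurableSpace α} {mγ : MeasurableSpace γ} [StandardBorelSpace γ] [Nonempty γ]
    (μ : Measure Ω) [IsProbabilityMeasure μ]
    {X : Ω → α} {W : Ω → γ} (hX : Measurable X) (hW : Measurable W)
    (hind : IndepFun X W μ)
    {F : α × γ → ℝ} (hF : Measurable F) (hFint : Integrable (fun ω => F (X ω, W ω)) μ) :
    μ[fun ω => F (X ω, W ω) | mα.comap X] =ᵐ[μ] fun ω => ∫ w, F (X ω, w) ∂(μ.map W) := by
  have h1 := condExp_prod_ae_eq_integral_condDistrib (μ := μ) hX hW.aemeasurable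
    hF.stronglyMeasurable hFint
  have hcd : ∀ᵐ x ∂μ.map X, Kernel.const α (μ.map W) x = condDistrib W X μ x := by
    refine Filter.EventuallyEq.symm (condDistrib_ae_eq_of_measure_eq_compProd_of_measurable hX hW ?_)
    rw [Measure.compProd_const]
    exact (indepFun_iff_map_prod_eq_prod_map_map hX.aemeasurable hW.aemeasurable).1 hind
  have hcd' : ∀ᵐ ω ∂μ, Kernel.const α (μ.map W) (X ω) = condDistrib W X μ (X ω) :=
    ae_of_ae_map hX.aemeasurable hcd
  filter_upwards [h1, hcd'] with ω h1 h2
  rw [h1, ← h2, Kernel.const_apply]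

/-- **SWIG conditional independence for the m-DAG X → A¹, A¹ → Y, X → Y, Y → R, X → R.**
Let `ε 0, ε 1, ε 2, ε 3` be mutually independent random elements on a probability space
`(Ω, μ)`, taking values in standard Borel spaces `E 0, E 1, E 2, E 3`, and let
`fX, fA, fY, fR` be measurable structural functions.  Define `X = fX (ε 0)`,
`A¹ = fA (X, ε 1)` and, for a fixed treatment value `a`, the counterfactuals
`Yᵃ = fY (X, a, ε 2)` and `Rᵃ = fR (X, Yᵃ, ε 3)`.  Then, conditionally on the
sigma-algebra generated by `X`, the random variable `A¹` is independent of the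
pair `(Yᵃ, Rᵃ)`. -/
theorem stmt0
    {Ω : Type} [MeasurableSpace Ω] [StandardBorelSpace Ω]
    (μ : Measure Ω) [IsProbabilityMeasure μ]
    {E : Fin 4 → Type} [∀ i, MeasurableSpace (E i)] [∀ i, StandardBorelSpace (E i)]
    {SX SA SY SR : Type}
    [MeasurableSpace SX] [StandardBorelSpace SX]
    [MeasurableSpace SA] [StandardBorelSpace SA]
    [MeasurableSpace SY] [StandardBorelSpace SY]
    [MeasurableSpace SR] [StandardBorelSpace SR]
    (ε : ∀ i, Ω → E i) (hε : ∀ i, Measurable (ε i))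
    (hindep : iIndepFun ε μ)
    (fX : E 0 → SX) (fA : SX × E 1 → SA) (fY : SX × SA × E 2 → SY)
    (fR : SX × SY × E 3 → SR)
    (hfX : Measurable fX) (hfA : Measurable fA) (hfY : Measurable fY)
    (hfR : Measurable fR)
    (a : SA)
    (X : Ω → SX) (A1 : Ω → SA) (Ya : Ω → SY) (Ra : Ω → SR)
    (hX : X = fun ω => fX (ε 0 ω))
    (hA1 : A1 = fun ω => fA (X ω, ε 1 ω))
    (hYa : Ya = fun ω => fY (X ω, a, ε 2 ω))
    (hRa : Ra = fun ω => fR (X ω, Ya ω, ε 3 ω))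
    (hXm : Measurable X) :
    CondIndepFun (MeasurableSpace.comap X inferInstance) hXm.comap_le
      A1 (fun ω => (Ya ω, Ra ω)) μ := by
  subst hA1 hYa hRa hX
  haveI : Nonempty Ω := μ.nonempty_of_neZero
  haveI : ∀ i, Nonempty (E i) := fun i => ⟨ε i (Classical.arbitrary Ω)⟩
  set W : Ω → E 1 := ε 1 with hWdef
  set V : Ω → E 2 × E 3 := fun ω => (ε 2 ω, ε 3 ω) with hVdef
  set Z : Ω → E 1 × (E 2 × E 3) := fun ω => (ε 1 ω, (ε 2 ω, ε 3 ω)) with hZdef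
  set G : SX × (E 2 × E 3) → SY × SR :=
    fun p => (fY (p.1, a, p.2.1), fR (p.1, fY (p.1, a, p.2.1), p.2.2)) with hGdef
  have hGm : Measurable G := by fun_prop
  have hWm : Measurable W := hε 1
  have hVm : Measurable V := (hε 2).prodMk (hε 3)
  have hZm : Measurable Z := (hε 1).prodMk hVm
  have hA1m : Measurable (fun ω => fA (fX (ε 0 ω), ε 1 ω)) := hfA.comp (hXm.prodMk (hε 1))
  have hBm : Measurable (fun ω => G (fX (ε 0 ω), V ω)) := hGm.comp (hXm.prodMk hVm)
  -- independence facts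
  have hXZ : IndepFun (fun ω => fX (ε 0 ω)) Z μ := by
    have hφ : Measurable (fun p : (∀ i : ({0} : Finset (Fin 4)), E i) => fX (p ⟨0, by decide⟩)) :=
      by fun_prop
    have hψ : Measurable (fun p : (∀ i : ({1, 2, 3} : Finset (Fin 4)), E i) =>
        ((p ⟨1, by decide⟩, (p ⟨2, by decide⟩, p ⟨3, by decide⟩)) : E 1 × E 2 × E 3)) := by
      fun_prop
    exact (hindep.indepFun_finset {0} ({1, 2, 3} : Finset (Fin 4)) (by decide) hε).comp hφ hψ
  have hXW : IndepFun (fun ω => fX (ε 0 ω)) W μ :=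
    ((hindep.indepFun (by decide : (0 : Fin 4) ≠ 1)).comp hfX measurable_id)
  have hXV : IndepFun (fun ω => fX (ε 0 ω)) V μ := by
    have hφ : Measurable (fun p : (∀ i : ({0} : Finset (Fin 4)), E i) => fX (p ⟨0, by decide⟩)) :=
      by fun_prop
    have hψ : Measurable (fun p : (∀ i : ({2, 3} : Finset (Fin 4)), E i) =>
        ((p ⟨2, by decide⟩, p ⟨3, by decide⟩) : E 2 × E 3)) := by fun_prop
    exact (hindep.indepFun_finset {0} ({2, 3} : Finset (Fin 4)) (by decide) hε).comp hφ hψ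
  have hWV : IndepFun W V μ := by
    have hφ : Measurable (fun p : (∀ i : ({1} : Finset (Fin 4)), E i) => p ⟨1, by decide⟩) :=
      by fun_prop
    have hψ : Measurable (fun p : (∀ i : ({2, 3} : Finset (Fin 4)), E i) =>
        ((p ⟨2, by decide⟩, p ⟨3, by decide⟩) : E 2 × E 3)) := by fun_prop
    exact (hindep.indepFun_finset {1} ({2, 3} : Finset (Fin 4)) (by decide) hε).comp hφ hψ
  have hmapZ : μ.map Z = (μ.map W).prod (μ.map V) :=
    (indepFun_iff_map_prod_eq_prod_map_map hWm.aemeasurable hVm.aemeasurable).1 hWV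
  rw [show (fun ω => (fY (fX (ε 0 ω), a, ε 2 ω), fR (fX (ε 0 ω), fY (fX (ε 0 ω), a, ε 2 ω), ε 3 ω)))
      = fun ω => G (fX (ε 0 ω), V ω) from rfl]
  rw [condIndepFun_iff_condExp_inter_preimage_eq_mul hA1m hBm]
  intro s t hs ht
  set g : SX × E 1 → ℝ := fun p => s.indicator (fun _ => (1 : ℝ)) (fA p) with hgdef
  set h : SX × (E 2 × E 3) → ℝ := fun p => t.indicator (fun _ => (1 : ℝ)) (G p) with hhdef
  set F : SX × (E 1 × (E 2 × E 3)) → ℝ := fun p => g (p.1, p.2.1) * h (p.1, p.2.2) with hFdef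
  have hgm : Measurable g := (measurable_const.indicator hs).comp hfA
  have hhm : Measurable h := (measurable_const.indicator ht).comp hGm
  have hFm : Measurable F :=
    (hgm.comp (measurable_fst.prodMk (measurable_fst.comp measurable_snd))).mul
      (hhm.comp (measurable_fst.prodMk (measurable_snd.comp measurable_snd)))
  have hgeq : ((fun ω => fA (fX (ε 0 ω), ε 1 ω)) ⁻¹' s).indicator (fun _ => (1 : ℝ))
      = fun ω => g (fX (ε 0 ω), W ω) := by
    funext ω
    by_cases hmem : fA (fX (ε 0 ω), ε 1 ω) ∈ s <;>
      simp [hgdef, Set.indicator_apply, hmem, hWdef]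
  have hheq : ((fun ω => G (fX (ε 0 ω), V ω)) ⁻¹' t).indicator (fun _ => (1 : ℝ))
      = fun ω => h (fX (ε 0 ω), V ω) := by
    funext ω
    by_cases hmem : G (fX (ε 0 ω), V ω) ∈ t <;>
      simp [hhdef, Set.indicator_apply, hmem]
  have hFeq : (((fun ω => fA (fX (ε 0 ω), ε 1 ω)) ⁻¹' s) ∩
        ((fun ω => G (fX (ε 0 ω), V ω)) ⁻¹' t)).indicator (fun _ => (1 : ℝ))
      = fun ω => F (fX (ε 0 ω), Z ω) := by
    funext ω
    by_cases h1 : fA (fX (ε 0 ω), ε 1 ω) ∈ s <;>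
      by_cases h2 : G (fX (ε 0 ω), V ω) ∈ t <;>
      simp only [hVdef] at h2 <;>
      simp [hFdef, hgdef, hhdef, Set.indicator_apply, h1, h2, hWdef, hZdef, hVdef]
  have hgint : Integrable (fun ω => g (fX (ε 0 ω), W ω)) μ := by
    rw [← hgeq]; exact (integrable_const 1).indicator (hA1m hs)
  have hhint : Integrable (fun ω => h (fX (ε 0 ω), V ω)) μ := by
    rw [← hheq]; exact (integrable_const 1).indicator (hBm ht)
  have hFint : Integrable (fun ω => F (fX (ε 0 ω), Z ω)) μ := by
    rw [← hFeq]; exact (integrable_const 1).indicator ((hA1m hs).inter (hBm ht))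
  have keyF := condexp_comap_eq_integral_map μ hXm hZm hXZ hFm hFint
  have keyg := condexp_comap_eq_integral_map μ hXm hWm hXW hgm hgint
  have keyh := condexp_comap_eq_integral_map μ hXm hVm hXV hhm hhint
  rw [hgeq, hheq, hFeq]
  filter_upwards [keyF, keyg, keyh] with ω e1 e2 e3
  calc (μ[fun ω => F (fX (ε 0 ω), Z ω)|MeasurableSpace.comap (fun ω => fX (ε 0 ω)) inferInstance]) ω
      = ∫ z, F (fX (ε 0 ω), z) ∂(μ.map Z) := e1
    _ = (∫ w, g (fX (ε 0 ω), w) ∂(μ.map W)) * ∫ v, h (fX (ε 0 ω), v) ∂(μ.map V) := by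
        rw [hmapZ]
        exact integral_prod_mul (fun w => g (fX (ε 0 ω), w)) (fun v => h (fX (ε 0 ω), v))
    _ = _ := by rw [← e2, ← e3]
end

section
/- Let X, A¹ be random variables with values in finite sets 𝒳 and 𝒜, let (Y^a)_{a∈𝒜} be real-valued random variables with finite range, let Y = Y^{A¹}, let R be {0,1}-valued with A = A¹ on {R=1}. Fix a ∈ 𝒜 and x ∈ 𝒳, and assume: (i) no unmeasured confounding, A¹ ⫫ Y^a | X; (ii) missing at random, R ⫫ A¹ | (X, Y); (iii) positivity, P(X=x, A¹=a) > 0 and P(R=1 | X=x', Y=y') > 0 for all (x', y') with positive probability. Define λ_a(x', y') = P(A = a | X = x', Y = y', R = 1). Then E(Y^a | X = x) = E(Y · λ_a(X, Y) | X = x) / E(λ_a(X, Y) | X = x). -/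
open MeasureTheory

/-- `pr μ s` is the probability of the event `s`, as a real number. -/
noncomputable def pr {Ω : Type*} [MeasurableSpace Ω] (μ : Measure Ω) (s : Set Ω) : ℝ :=
  (μ s).toReal

/-- `cpr μ s t` is the conditional probability of `s` given `t`, as a real number. -/
noncomputable def cpr {Ω : Type*} [MeasurableSpace Ω] (μ : Measure Ω) (s t : Set Ω) : ℝ :=
  pr μ (s ∩ t) / pr μ t

/-- `landa μ X Y A R a x' y'` is `λ_a(x', y') = P(A = a | X = x', Y = y', R = 1)`. -/
noncomputable def landa {Ω 𝒳 𝒜 : Type*} [MeasurableSpace Ω] (μ : Measure Ω)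
    (X : Ω → 𝒳) (Y : Ω → ℝ) (A : Ω → 𝒜) (R : Ω → Bool) (a : 𝒜) (x' : 𝒳) (y' : ℝ) : ℝ :=
  cpr μ {ω | A ω = a} {ω | X ω = x' ∧ Y ω = y' ∧ R ω = true}

/-- **Identification of `E(Yᵃ | X = x)` with a partially missing exposure.**
`A¹` is the exposure with values in a finite set `𝒜`, `R` its (`Bool`-valued, `true = 1`)
missingness indicator, `A` the observed exposure with `A = A¹` on `{R = 1}`, `X` fully observed
covariates with values in a finite set `𝒳`, `Ypot a = Yᵃ` the real-valued potential outcomes with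
finite range contained in `𝒴`, and `Y = Y^{A¹}` the factual outcome.  Under
(i) no unmeasured confounding `A¹ ⫫ Yᵃ | X`, (ii) missing at random `R ⫫ A¹ | (X, Y)` and
(iii) positivity, one has
`E(Yᵃ | X = x) = E(Y λ_a(X, Y) | X = x) / E(λ_a(X, Y) | X = x)`,
all conditional expectations being finite sums over the range `𝒴`. -/
theorem stmt3
    {Ω : Type*} [MeasurableSpace Ω] (μ : Measure Ω) [IsProbabilityMeasure μ]
    {𝒳 𝒜 : Type*} [Fintype 𝒳] [Fintype 𝒜]
    [MeasurableSpace 𝒳] [MeasurableSingletonClass 𝒳]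
    [MeasurableSpace 𝒜] [MeasurableSingletonClass 𝒜]
    (X : Ω → 𝒳) (A1 : Ω → 𝒜) (A : Ω → 𝒜) (R : Ω → Bool)
    (Ypot : 𝒜 → Ω → ℝ) (Y : Ω → ℝ)
    (hXm : Measurable X) (hA1m : Measurable A1) (hAm : Measurable A) (hRm : Measurable R)
    (hYpotm : ∀ a, Measurable (Ypot a))
    (𝒴 : Finset ℝ) (hrange : ∀ a ω, Ypot a ω ∈ 𝒴)
    (hconsY : ∀ ω, Y ω = Ypot (A1 ω) ω)
    (hconsA : ∀ ω, R ω = true → A ω = A1 ω)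
    (a : 𝒜) (x : 𝒳)
    (hNUC : ∀ x' : 𝒳, 0 < pr μ {ω | X ω = x'} →
      ∀ (a' : 𝒜) (y : ℝ),
        cpr μ {ω | A1 ω = a' ∧ Ypot a ω = y} {ω | X ω = x'} =
          cpr μ {ω | A1 ω = a'} {ω | X ω = x'} *
            cpr μ {ω | Ypot a ω = y} {ω | X ω = x'})
    (hMAR : ∀ (x' : 𝒳) (y' : ℝ), 0 < pr μ {ω | X ω = x' ∧ Y ω = y'} →
      ∀ (r : Bool) (a' : 𝒜),
        cpr μ {ω | R ω = r ∧ A1 ω = a'} {ω | X ω = x' ∧ Y ω = y'} =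
          cpr μ {ω | R ω = r} {ω | X ω = x' ∧ Y ω = y'} *
            cpr μ {ω | A1 ω = a'} {ω | X ω = x' ∧ Y ω = y'})
    (hpos1 : 0 < pr μ {ω | X ω = x ∧ A1 ω = a})
    (hpos2 : ∀ (x' : 𝒳) (y' : ℝ), 0 < pr μ {ω | X ω = x' ∧ Y ω = y'} →
      0 < cpr μ {ω | R ω = true} {ω | X ω = x' ∧ Y ω = y'}) :
    (∑ y ∈ 𝒴, y * cpr μ {ω | Ypot a ω = y} {ω | X ω = x}) =
      (∑ y ∈ 𝒴, y * landa μ X Y A R a x y * cpr μ {ω | Y ω = y} {ω | X ω = x}) /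
        (∑ y ∈ 𝒴, landa μ X Y A R a x y * cpr μ {ω | Y ω = y} {ω | X ω = x}) := by
  classical
  -- abbreviations
  set p := pr μ {ω | X ω = x} with hpdef
  have hps : {ω | X ω = x ∧ A1 ω = a} ⊆ {ω | X ω = x} := fun ω h => h.1
  have hXx : (0:ℝ) < p := lt_of_lt_of_le hpos1
    (ENNReal.toReal_mono (measure_ne_top μ _) (measure_mono hps))
  have hα : (0:ℝ) < cpr μ {ω | A1 ω = a} {ω | X ω = x} := by
    have hset : {ω | A1 ω = a} ∩ {ω | X ω = x} = {ω | X ω = x ∧ A1 ω = a} := by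
      ext ω; simp only [Set.mem_inter_iff, Set.mem_setOf_eq]; tauto
    unfold cpr
    rw [hset]
    exact div_pos hpos1 hXx
  set α := cpr μ {ω | A1 ω = a} {ω | X ω = x} with hαdef
  have hα0 : α ≠ 0 := ne_of_gt hα
  -- key pointwise identity
  have key : ∀ y : ℝ, landa μ X Y A R a x y * cpr μ {ω | Y ω = y} {ω | X ω = x}
      = α * cpr μ {ω | Ypot a ω = y} {ω | X ω = x} := by
    intro y
    have hsetYX : {ω | Y ω = y} ∩ {ω | X ω = x} = {ω | X ω = x ∧ Y ω = y} := by
      ext ω; simp only [Set.mem_inter_iff, Set.mem_setOf_eq]; tauto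
    have hsetA1 : {ω | A1 ω = a ∧ Ypot a ω = y} ∩ {ω | X ω = x}
        = {ω | A1 ω = a} ∩ {ω | X ω = x ∧ Y ω = y} := by
      ext ω
      simp only [Set.mem_inter_iff, Set.mem_setOf_eq]
      constructor
      · rintro ⟨⟨h1, h2⟩, h3⟩
        exact ⟨h1, h3, by rw [hconsY ω, h1]; exact h2⟩
      · rintro ⟨h1, h3, h2⟩
        exact ⟨⟨h1, by rw [← h1, ← hconsY ω]; exact h2⟩, h3⟩
    have hNUCy := hNUC x hXx a y
    by_cases hq : 0 < pr μ {ω | X ω = x ∧ Y ω = y}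
    · -- positive case
      have hq0 : pr μ {ω | X ω = x ∧ Y ω = y} ≠ 0 := ne_of_gt hq
      have hAset : {ω | A ω = a} ∩ {ω | X ω = x ∧ Y ω = y ∧ R ω = true}
          = {ω | R ω = true ∧ A1 ω = a} ∩ {ω | X ω = x ∧ Y ω = y} := by
        ext ω
        simp only [Set.mem_inter_iff, Set.mem_setOf_eq]
        constructor
        · rintro ⟨hA, hX, hY, hR⟩
          exact ⟨⟨hR, (hconsA ω hR) ▸ hA⟩, hX, hY⟩
        · rintro ⟨⟨hR, hA1⟩, hX, hY⟩
          exact ⟨(hconsA ω hR).trans hA1, hX, hY, hR⟩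
      have hBset : {ω | X ω = x ∧ Y ω = y ∧ R ω = true}
          = {ω | R ω = true} ∩ {ω | X ω = x ∧ Y ω = y} := by
        ext ω; simp only [Set.mem_inter_iff, Set.mem_setOf_eq]; tauto
      have hRpos := hpos2 x y hq
      have hR0 : cpr μ {ω | R ω = true} {ω | X ω = x ∧ Y ω = y} ≠ 0 := ne_of_gt hRpos
      have e1 : pr μ ({ω | R ω = true ∧ A1 ω = a} ∩ {ω | X ω = x ∧ Y ω = y})
          = cpr μ {ω | R ω = true ∧ A1 ω = a} {ω | X ω = x ∧ Y ω = y} *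
            pr μ {ω | X ω = x ∧ Y ω = y} := (div_mul_cancel₀ _ hq0).symm
      have e2 : pr μ ({ω | R ω = true} ∩ {ω | X ω = x ∧ Y ω = y})
          = cpr μ {ω | R ω = true} {ω | X ω = x ∧ Y ω = y} *
            pr μ {ω | X ω = x ∧ Y ω = y} := (div_mul_cancel₀ _ hq0).symm
      have hlanda : landa μ X Y A R a x y
          = cpr μ {ω | A1 ω = a} {ω | X ω = x ∧ Y ω = y} := by
        have hset' : landa μ X Y A R a x y =
            pr μ ({ω | R ω = true ∧ A1 ω = a} ∩ {ω | X ω = x ∧ Y ω = y}) /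
              pr μ ({ω | R ω = true} ∩ {ω | X ω = x ∧ Y ω = y}) := by
          unfold landa cpr
          rw [hAset, hBset]
        rw [hset', e1, e2, hMAR x y hq true a, mul_right_comm,
          mul_div_cancel_left₀ _ (mul_ne_zero hR0 hq0)]
      have e3 : cpr μ {ω | A1 ω = a} {ω | X ω = x ∧ Y ω = y} *
          cpr μ {ω | Y ω = y} {ω | X ω = x}
          = cpr μ {ω | A1 ω = a ∧ Ypot a ω = y} {ω | X ω = x} := by
        unfold cpr
        rw [hsetYX, hsetA1]
        exact div_mul_div_cancel₀ hq0
      rw [hlanda, e3, hNUCy, ← hαdef]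
    · -- zero case
      push_neg at hq
      have hq0 : pr μ {ω | X ω = x ∧ Y ω = y} = 0 :=
        le_antisymm hq ENNReal.toReal_nonneg
      have hL : cpr μ {ω | Y ω = y} {ω | X ω = x} = 0 := by
        unfold cpr
        rw [hsetYX, hq0, zero_div]
      have hsub : {ω | A1 ω = a ∧ Ypot a ω = y} ∩ {ω | X ω = x}
          ⊆ {ω | X ω = x ∧ Y ω = y} := by
        rw [hsetA1]; exact Set.inter_subset_right
      have hR0 : pr μ ({ω | A1 ω = a ∧ Ypot a ω = y} ∩ {ω | X ω = x}) = 0 :=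
        le_antisymm (hq0 ▸ ENNReal.toReal_mono (measure_ne_top μ _) (measure_mono hsub))
          ENNReal.toReal_nonneg
      have hcpr0 : cpr μ {ω | A1 ω = a ∧ Ypot a ω = y} {ω | X ω = x} = 0 := by
        unfold cpr; rw [hR0, zero_div]
      rw [hL, mul_zero, hαdef, ← hNUCy, hcpr0]
  -- the conditional probabilities of Ypot a sum to one
  have hsum1 : ∑ y ∈ 𝒴, cpr μ {ω | Ypot a ω = y} {ω | X ω = x} = 1 := by
    have hmeas : ∀ y ∈ 𝒴, MeasurableSet ({ω | Ypot a ω = y} ∩ {ω | X ω = x}) := by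
      intro y _
      exact ((hYpotm a) (measurableSet_singleton y)).inter (hXm (measurableSet_singleton x))
    have hdisj : (↑𝒴 : Set ℝ).PairwiseDisjoint
        (fun y => {ω | Ypot a ω = y} ∩ {ω | X ω = x}) := by
      intro y _ z _ hyz
      refine Set.disjoint_left.mpr ?_
      rintro ω ⟨h1, _⟩ ⟨h2, _⟩
      exact hyz (h1.symm.trans h2)
    have hunion : (⋃ y ∈ 𝒴, ({ω | Ypot a ω = y} ∩ {ω | X ω = x})) = {ω | X ω = x} := by
      ext ω
      simp only [Set.mem_iUnion, Set.mem_inter_iff, Set.mem_setOf_eq, exists_prop]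
      constructor
      · rintro ⟨y, _, _, h⟩; exact h
      · intro h; exact ⟨Ypot a ω, hrange a ω, rfl, h⟩
    have hmeq : ∑ y ∈ 𝒴, μ ({ω | Ypot a ω = y} ∩ {ω | X ω = x}) = μ {ω | X ω = x} := by
      rw [← measure_biUnion_finset hdisj hmeas, hunion]
    have : ∑ y ∈ 𝒴, pr μ ({ω | Ypot a ω = y} ∩ {ω | X ω = x}) = p := by
      rw [hpdef]
      unfold pr
      rw [← ENNReal.toReal_sum (fun y _ => measure_ne_top μ _), hmeq]
    unfold cpr
    rw [← Finset.sum_div, this, div_self (ne_of_gt hXx)]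
  -- finish
  have hnum : ∑ y ∈ 𝒴, y * landa μ X Y A R a x y * cpr μ {ω | Y ω = y} {ω | X ω = x}
      = α * ∑ y ∈ 𝒴, y * cpr μ {ω | Ypot a ω = y} {ω | X ω = x} := by
    rw [Finset.mul_sum]
    refine Finset.sum_congr rfl fun y _ => ?_
    rw [mul_assoc, key y]; ring
  have hden : ∑ y ∈ 𝒴, landa μ X Y A R a x y * cpr μ {ω | Y ω = y} {ω | X ω = x} = α := by
    rw [Finset.sum_congr rfl fun y _ => key y, ← Finset.mul_sum, hsum1, mul_one]
  rw [hnum, hden, mul_div_cancel_left₀ _ hα0]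
end

section
/- Under the permutation missingness model, for every x ∈ 𝒳 and y ∈ 𝒴, P(X¹=x, Y¹=y) = P(R₁=1, Y¹=y) · P(X¹=x | R₁=1, Y¹=y, R₂=1) · [ 1 + P(X¹=x | R₁=0, R₂=1) · P(R₁=0) / ( Σ_{y'∈𝒴} P(X¹=x | R₁=1, Y¹=y', R₂=1) · P(R₁=1, Y¹=y') ) ]. -/
open MeasureTheory

lemma pr_mono {Ω : Type*} [MeasurableSpace Ω] (μ : Measure Ω) [IsFiniteMeasure μ]
    {s t : Set Ω} (h : s ⊆ t) : pr μ s ≤ pr μ t :=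
  ENNReal.toReal_mono (measure_ne_top μ t) (measure_mono h)

lemma pr_union {Ω : Type*} [MeasurableSpace Ω] (μ : Measure Ω) [IsFiniteMeasure μ]
    {s t : Set Ω} (hd : Disjoint s t) (ht : MeasurableSet t) :
    pr μ (s ∪ t) = pr μ s + pr μ t := by
  unfold pr
  rw [measure_union hd ht, ENNReal.toReal_add (measure_ne_top μ s) (measure_ne_top μ t)]

lemma sum_pr_fiber {Ω : Type*} [MeasurableSpace Ω] (μ : Measure Ω) [IsFiniteMeasure μ]
    (Y1 : Ω → ℝ) (hY1m : Measurable Y1) (𝒴 : Finset ℝ) (hrange : ∀ ω, Y1 ω ∈ 𝒴)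
    (S : Set Ω) (hS : MeasurableSet S) :
    ∑ y ∈ 𝒴, pr μ (S ∩ {ω | Y1 ω = y}) = pr μ S := by
  have hdisj : (↑𝒴 : Set ℝ).PairwiseDisjoint (fun y => S ∩ {ω | Y1 ω = y}) := by
    intro a _ b _ hab
    refine Set.disjoint_left.mpr ?_
    rintro ω ⟨_, ha⟩ ⟨_, hb⟩
    exact hab ((ha : Y1 ω = a).symm.trans hb)
  have hunion : (⋃ y ∈ 𝒴, S ∩ {ω | Y1 ω = y}) = S := by
    ext ω
    simp only [Set.mem_iUnion, Set.mem_inter_iff, Set.mem_setOf_eq]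
    exact ⟨fun ⟨y, _, hs, _⟩ => hs, fun h => ⟨Y1 ω, hrange ω, h, rfl⟩⟩
  conv_rhs => rw [← hunion]
  unfold pr
  rw [measure_biUnion_finset hdisj
    (fun y _ => hS.inter (hY1m (measurableSet_singleton y))),
    ENNReal.toReal_sum (fun y _ => measure_ne_top μ _)]

/-- **Identification of the full data law in the permutation missingness model.**
`Y¹` is real-valued with finite range `⊆ 𝒴`, `X¹` has values in a finite set `𝒳`, and
`R₁, R₂` are `Bool`-valued (`true = 1`) missingness indicators satisfying
(i) `R₁ ⫫ Y¹ | X¹`; (ii) given `R₁ = 1, Y¹ = y`, `R₂ ⫫ X¹`, and given `R₁ = 0`,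
`R₂ ⫫ (Y¹, X¹)`; (iii) positivity.  Then for every `x ∈ 𝒳` and `y ∈ 𝒴`,
`P(X¹=x, Y¹=y) = P(R₁=1, Y¹=y) ⬝ P(X¹=x | R₁=1, Y¹=y, R₂=1) ⬝
  [1 + P(X¹=x | R₁=0, R₂=1) P(R₁=0) / (∑_{y'} P(X¹=x | R₁=1, Y¹=y', R₂=1) P(R₁=1, Y¹=y'))]`. -/
theorem stmt4
    {Ω : Type*} [MeasurableSpace Ω] (μ : Measure Ω) [IsProbabilityMeasure μ]
    {𝒳 : Type*} [Fintype 𝒳] [MeasurableSpace 𝒳] [MeasurableSingletonClass 𝒳]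
    (Y1 : Ω → ℝ) (X1 : Ω → 𝒳) (R1 R2 : Ω → Bool)
    (hY1m : Measurable Y1) (hX1m : Measurable X1) (hR1m : Measurable R1)
    (hR2m : Measurable R2)
    (𝒴 : Finset ℝ) (hrange : ∀ ω, Y1 ω ∈ 𝒴)
    (hCI1 : ∀ x : 𝒳, 0 < pr μ {ω | X1 ω = x} → ∀ (r : Bool) (y : ℝ),
      cpr μ {ω | R1 ω = r ∧ Y1 ω = y} {ω | X1 ω = x} =
        cpr μ {ω | R1 ω = r} {ω | X1 ω = x} * cpr μ {ω | Y1 ω = y} {ω | X1 ω = x})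
    (hCI2a : ∀ y : ℝ, 0 < pr μ {ω | R1 ω = true ∧ Y1 ω = y} → ∀ (r : Bool) (x : 𝒳),
      cpr μ {ω | R2 ω = r ∧ X1 ω = x} {ω | R1 ω = true ∧ Y1 ω = y} =
        cpr μ {ω | R2 ω = r} {ω | R1 ω = true ∧ Y1 ω = y} *
          cpr μ {ω | X1 ω = x} {ω | R1 ω = true ∧ Y1 ω = y})
    (hCI2b : ∀ (r : Bool) (y : ℝ) (x : 𝒳),
      cpr μ {ω | R2 ω = r ∧ Y1 ω = y ∧ X1 ω = x} {ω | R1 ω = false} =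
        cpr μ {ω | R2 ω = r} {ω | R1 ω = false} *
          cpr μ {ω | Y1 ω = y ∧ X1 ω = x} {ω | R1 ω = false})
    (hpos1 : ∀ x : 𝒳, ∀ y ∈ 𝒴,
      0 < pr μ {ω | R1 ω = true ∧ R2 ω = true ∧ Y1 ω = y ∧ X1 ω = x})
    (hpos2 : 0 < pr μ {ω | R1 ω = false ∧ R2 ω = true}) :
    ∀ x : 𝒳, ∀ y ∈ 𝒴,
      pr μ {ω | X1 ω = x ∧ Y1 ω = y} =
        pr μ {ω | R1 ω = true ∧ Y1 ω = y} *
          cpr μ {ω | X1 ω = x} {ω | R1 ω = true ∧ Y1 ω = y ∧ R2 ω = true} *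
          (1 + cpr μ {ω | X1 ω = x} {ω | R1 ω = false ∧ R2 ω = true} *
              pr μ {ω | R1 ω = false} /
              (∑ y' ∈ 𝒴, cpr μ {ω | X1 ω = x} {ω | R1 ω = true ∧ Y1 ω = y' ∧ R2 ω = true} *
                pr μ {ω | R1 ω = true ∧ Y1 ω = y'})) := by
  intro x y hy
  -- measurability of basic events
  have mX : MeasurableSet {ω | X1 ω = x} := hX1m (measurableSet_singleton x)
  have mY : ∀ y' : ℝ, MeasurableSet {ω | Y1 ω = y'} :=
    fun y' => hY1m (measurableSet_singleton y')
  have mR1 : ∀ b : Bool, MeasurableSet {ω | R1 ω = b} :=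
    fun b => hR1m (measurableSet_singleton b)
  -- positivity facts
  have hpx : 0 < pr μ {ω | X1 ω = x} :=
    lt_of_lt_of_le (hpos1 x y hy) (pr_mono μ (fun ω h => h.2.2.2))
  have hq : ∀ y' ∈ 𝒴, 0 < pr μ {ω | R1 ω = true ∧ Y1 ω = y'} :=
    fun y' hy' => lt_of_lt_of_le (hpos1 x y' hy') (pr_mono μ (fun ω h => ⟨h.1, h.2.2.1⟩))
  have hT : ∀ y' ∈ 𝒴, 0 < pr μ {ω | R1 ω = true ∧ Y1 ω = y' ∧ R2 ω = true} :=
    fun y' hy' => lt_of_lt_of_le (hpos1 x y' hy') (pr_mono μ (fun ω h => ⟨h.1, h.2.2.1, h.2.1⟩))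
  have hp0 : 0 < pr μ {ω | R1 ω = false} :=
    lt_of_lt_of_le hpos2 (pr_mono μ (fun ω h => h.1))
  have hF2 : 0 < pr μ {ω | R1 ω = false ∧ R2 ω = true} := hpos2
  -- Step A : cpr(X=x | R1=1,Y=y',R2=1) * P(R1=1,Y=y') = P(R1=1,Y=y',X=x)
  have hA : ∀ y' ∈ 𝒴,
      cpr μ {ω | X1 ω = x} {ω | R1 ω = true ∧ Y1 ω = y' ∧ R2 ω = true} *
        pr μ {ω | R1 ω = true ∧ Y1 ω = y'} =
      pr μ {ω | R1 ω = true ∧ Y1 ω = y' ∧ X1 ω = x} := by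
    intro y' hy'
    have h2 := hCI2a y' (hq y' hy') true x
    unfold cpr at h2 ⊢
    have e1 : {ω | R2 ω = true ∧ X1 ω = x} ∩ {ω | R1 ω = true ∧ Y1 ω = y'} =
        {ω | X1 ω = x} ∩ {ω | R1 ω = true ∧ Y1 ω = y' ∧ R2 ω = true} := by
      ext ω; simp only [Set.mem_inter_iff, Set.mem_setOf_eq] <;> tauto
    have e2 : {ω | R2 ω = true} ∩ {ω | R1 ω = true ∧ Y1 ω = y'} =
        {ω | R1 ω = true ∧ Y1 ω = y' ∧ R2 ω = true} := by
      ext ω; simp only [Set.mem_inter_iff, Set.mem_setOf_eq] <;> tauto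
    have e3 : {ω | X1 ω = x} ∩ {ω | R1 ω = true ∧ Y1 ω = y'} =
        {ω | R1 ω = true ∧ Y1 ω = y' ∧ X1 ω = x} := by
      ext ω; simp only [Set.mem_inter_iff, Set.mem_setOf_eq] <;> tauto
    rw [e1, e2, e3] at h2
    have hqn := (hq y' hy').ne'
    have hTn := (hT y' hy').ne'
    field_simp at h2 ⊢
    refine mul_right_cancel₀ hqn ?_
    linear_combination pr μ {ω | R1 ω = true ∧ Y1 ω = y'} * h2
  -- Step B : cpr(X=x | R1=0,R2=1) * P(R1=0) = P(R1=0,X=x)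
  have hB : cpr μ {ω | X1 ω = x} {ω | R1 ω = false ∧ R2 ω = true} *
      pr μ {ω | R1 ω = false} = pr μ {ω | R1 ω = false ∧ X1 ω = x} := by
    have hsum1 : ∑ y' ∈ 𝒴,
        pr μ ({ω | R2 ω = true ∧ Y1 ω = y' ∧ X1 ω = x} ∩ {ω | R1 ω = false}) =
        pr μ ({ω | X1 ω = x} ∩ {ω | R1 ω = false ∧ R2 ω = true}) := by
      have e : ∀ y' : ℝ, {ω | R2 ω = true ∧ Y1 ω = y' ∧ X1 ω = x} ∩ {ω | R1 ω = false} =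
          ({ω | X1 ω = x} ∩ {ω | R1 ω = false ∧ R2 ω = true}) ∩ {ω | Y1 ω = y'} := by
        intro y'; ext ω
        simp only [Set.mem_inter_iff, Set.mem_setOf_eq] <;> tauto
      rw [Finset.sum_congr rfl (fun y' _ => by rw [e y'])]
      exact sum_pr_fiber μ Y1 hY1m 𝒴 hrange _
        (mX.inter ((mR1 false).inter (hR2m (measurableSet_singleton true))))
    have hsum2 : ∑ y' ∈ 𝒴,
        pr μ ({ω | Y1 ω = y' ∧ X1 ω = x} ∩ {ω | R1 ω = false}) =
        pr μ ({ω | R1 ω = false ∧ X1 ω = x}) := by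
      have e : ∀ y' : ℝ, {ω | Y1 ω = y' ∧ X1 ω = x} ∩ {ω | R1 ω = false} =
          {ω | R1 ω = false ∧ X1 ω = x} ∩ {ω | Y1 ω = y'} := by
        intro y'; ext ω
        simp only [Set.mem_inter_iff, Set.mem_setOf_eq] <;> tauto
      rw [Finset.sum_congr rfl (fun y' _ => by rw [e y'])]
      exact sum_pr_fiber μ Y1 hY1m 𝒴 hrange _ ((mR1 false).inter mX)
    have key : pr μ ({ω | X1 ω = x} ∩ {ω | R1 ω = false ∧ R2 ω = true}) *
        pr μ {ω | R1 ω = false} =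
        pr μ ({ω | R2 ω = true} ∩ {ω | R1 ω = false}) *
          pr μ {ω | R1 ω = false ∧ X1 ω = x} := by
      rw [← hsum1, ← hsum2, Finset.sum_mul, Finset.mul_sum]
      refine Finset.sum_congr rfl (fun y' _ => ?_)
      have h2 := hCI2b true y' x
      unfold cpr at h2
      field_simp at h2
      refine mul_right_cancel₀ hp0.ne' ?_
      linear_combination pr μ {ω | R1 ω = false} * h2
    have e4 : {ω | R2 ω = true} ∩ {ω | R1 ω = false} = {ω | R1 ω = false ∧ R2 ω = true} := by
      ext ω; simp only [Set.mem_inter_iff, Set.mem_setOf_eq] <;> tauto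
    rw [e4] at key
    unfold cpr
    rw [div_mul_eq_mul_div, div_eq_iff hF2.ne']
    linarith [key]
  -- key consequence of CI1 : P(R1=r,Y=y'',X=x) * P(X=x) = P(R1=r,X=x) * P(Y=y'',X=x)
  have hkey : ∀ (r : Bool) (y'' : ℝ),
      pr μ {ω | R1 ω = r ∧ Y1 ω = y'' ∧ X1 ω = x} * pr μ {ω | X1 ω = x} =
      pr μ {ω | R1 ω = r ∧ X1 ω = x} * pr μ {ω | Y1 ω = y'' ∧ X1 ω = x} := by
    intro r y''
    have h1 := hCI1 x hpx r y''
    unfold cpr at h1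
    have e1 : {ω | R1 ω = r ∧ Y1 ω = y''} ∩ {ω | X1 ω = x} =
        {ω | R1 ω = r ∧ Y1 ω = y'' ∧ X1 ω = x} := by
      ext ω; simp only [Set.mem_inter_iff, Set.mem_setOf_eq] <;> tauto
    have e2 : {ω | R1 ω = r} ∩ {ω | X1 ω = x} = {ω | R1 ω = r ∧ X1 ω = x} := by
      ext ω; simp only [Set.mem_inter_iff, Set.mem_setOf_eq] <;> tauto
    have e3 : {ω | Y1 ω = y''} ∩ {ω | X1 ω = x} = {ω | Y1 ω = y'' ∧ X1 ω = x} := by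
      ext ω; simp only [Set.mem_inter_iff, Set.mem_setOf_eq] <;> tauto
    rw [e1, e2, e3] at h1
    field_simp at h1
    refine mul_right_cancel₀ hpx.ne' ?_
    linear_combination pr μ {ω | X1 ω = x} * h1
  -- W = P(R1=1, X=x) equals the sum
  have hWsum : ∑ y' ∈ 𝒴, pr μ {ω | R1 ω = true ∧ Y1 ω = y' ∧ X1 ω = x} =
      pr μ {ω | R1 ω = true ∧ X1 ω = x} := by
    have e : ∀ y' : ℝ, {ω | R1 ω = true ∧ Y1 ω = y' ∧ X1 ω = x} =
        {ω | R1 ω = true ∧ X1 ω = x} ∩ {ω | Y1 ω = y'} := by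
      intro y'; ext ω; simp only [Set.mem_inter_iff, Set.mem_setOf_eq] <;> tauto
    rw [Finset.sum_congr rfl (fun y' _ => by rw [e y'])]
    exact sum_pr_fiber μ Y1 hY1m 𝒴 hrange _ ((mR1 true).inter mX)
  have hW : 0 < pr μ {ω | R1 ω = true ∧ X1 ω = x} :=
    lt_of_lt_of_le (hpos1 x y hy) (pr_mono μ (fun ω h => ⟨h.1, h.2.2.2⟩))
  -- split the target probability by the value of R1
  have hsplit : pr μ {ω | X1 ω = x ∧ Y1 ω = y} =
      pr μ {ω | R1 ω = true ∧ Y1 ω = y ∧ X1 ω = x} +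
      pr μ {ω | R1 ω = false ∧ Y1 ω = y ∧ X1 ω = x} := by
    have e : {ω | X1 ω = x ∧ Y1 ω = y} =
        {ω | R1 ω = true ∧ Y1 ω = y ∧ X1 ω = x} ∪
        {ω | R1 ω = false ∧ Y1 ω = y ∧ X1 ω = x} := by
      ext ω; simp only [Set.mem_union, Set.mem_setOf_eq]
      rcases Bool.eq_false_or_eq_true (R1 ω) with h | h <;> simp [h] <;> tauto
    rw [e]
    refine pr_union μ ?_ ((mR1 false).inter ((mY y).inter mX))
    refine Set.disjoint_left.mpr ?_
    rintro ω ⟨h1, -⟩ ⟨h2, -⟩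
    simp [h1] at h2
  -- rewrite the sum in the goal
  rw [Finset.sum_congr rfl hA, hWsum, hB]
  rw [mul_comm (pr μ {ω | R1 ω = true ∧ Y1 ω = y}), hA y hy, hsplit]
  -- final algebra
  have hDW : pr μ {ω | R1 ω = false ∧ Y1 ω = y ∧ X1 ω = x} *
      pr μ {ω | R1 ω = true ∧ X1 ω = x} =
      pr μ {ω | R1 ω = true ∧ Y1 ω = y ∧ X1 ω = x} *
      pr μ {ω | R1 ω = false ∧ X1 ω = x} := by
    have h1 := hkey true y
    have h2 := hkey false y
    refine mul_right_cancel₀ hpx.ne' ?_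
    linear_combination pr μ {ω | R1 ω = true ∧ X1 ω = x} * h2 -
      pr μ {ω | R1 ω = false ∧ X1 ω = x} * h1
  have hWne := hW.ne'
  field_simp
  linear_combination hDW
end

section
/- Under the permutation missingness model, E(Y¹ | R₁=0) = Σ_{x∈𝒳} P(X¹=x | R₁=0, R₂=1) · [ Σ_{y∈𝒴} y · P(Y¹=y | R₁=1) · P(X¹=x | R₁=1, Y¹=y, R₂=1) ] / [ Σ_{y∈𝒴} P(Y¹=y | R₁=1) · P(X¹=x | R₁=1, Y¹=y, R₂=1) ]. -/
open MeasureTheory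

lemma pr_nonneg {Ω : Type*} [MeasurableSpace Ω] (μ : Measure Ω) (s : Set Ω) : 0 ≤ pr μ s :=
  ENNReal.toReal_nonneg

lemma pr_pos_mono {Ω : Type*} [MeasurableSpace Ω] (μ : Measure Ω) [IsFiniteMeasure μ]
    {s t : Set Ω} (h : s ⊆ t) (hs : 0 < pr μ s) : 0 < pr μ t :=
  lt_of_lt_of_le hs (pr_mono μ h)

lemma pr_eq_zero_of_le {Ω : Type*} [MeasurableSpace Ω] (μ : Measure Ω) [IsFiniteMeasure μ]
    {s t : Set Ω} (h : s ⊆ t) (ht : pr μ t = 0) : pr μ s = 0 :=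
  le_antisymm (ht ▸ pr_mono μ h) (pr_nonneg μ s)

lemma pr_fiber_sum {Ω : Type*} [MeasurableSpace Ω] (μ : Measure Ω) [IsFiniteMeasure μ]
    {α : Type*} (f : Ω → α) (hf : ∀ a : α, MeasurableSet {ω | f ω = a})
    {S : Set Ω} (hS : MeasurableSet S) (t : Finset α) (ht : ∀ ω ∈ S, f ω ∈ t) :
    pr μ S = ∑ a ∈ t, pr μ (S ∩ {ω | f ω = a}) := by
  have h1 : S = ⋃ a ∈ t, S ∩ {ω | f ω = a} := by
    ext ω
    simp only [Set.mem_iUnion, Set.mem_inter_iff, Set.mem_setOf_eq, exists_prop]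
    exact ⟨fun h => ⟨f ω, ht ω h, h, rfl⟩, fun ⟨a, _, h, _⟩ => h⟩
  have h2 : μ (⋃ a ∈ t, S ∩ {ω | f ω = a}) = ∑ a ∈ t, μ (S ∩ {ω | f ω = a}) := by
    refine measure_biUnion_finset ?_ fun a _ => hS.inter (hf a)
    intro a _ b _ hab
    refine Set.disjoint_left.2 fun ω ⟨_, ha⟩ ⟨_, hb⟩ => hab ?_
    rw [← ha, ← hb]
  unfold pr
  conv_lhs => rw [h1]
  rw [h2, ENNReal.toReal_sum fun a _ => measure_ne_top μ _]

/-- **Identification of `E(Y¹ | R₁ = 0)` in the permutation missingness model.**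
`Y¹` is real-valued with finite range `⊆ 𝒴`, `X¹` has values in a finite set `𝒳`, and
`R₁, R₂` are `Bool`-valued (`true = 1`) missingness indicators satisfying
(i) `R₁ ⫫ Y¹ | X¹`; (ii) given `R₁ = 1, Y¹ = y`, `R₂ ⫫ X¹`, and given `R₁ = 0`,
`R₂ ⫫ (Y¹, X¹)`; (iii) positivity.  Then
`E(Y¹ | R₁=0) = ∑_x P(X¹=x | R₁=0, R₂=1) ⬝
  [∑_y y P(Y¹=y | R₁=1) P(X¹=x | R₁=1, Y¹=y, R₂=1)] /
  [∑_y P(Y¹=y | R₁=1) P(X¹=x | R₁=1, Y¹=y, R₂=1)]`,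
conditional expectations being finite sums over `𝒴`. -/
theorem stmt5
    {Ω : Type*} [MeasurableSpace Ω] (μ : Measure Ω) [IsProbabilityMeasure μ]
    {𝒳 : Type*} [Fintype 𝒳] [MeasurableSpace 𝒳] [MeasurableSingletonClass 𝒳]
    (Y1 : Ω → ℝ) (X1 : Ω → 𝒳) (R1 R2 : Ω → Bool)
    (hY1m : Measurable Y1) (hX1m : Measurable X1) (hR1m : Measurable R1)
    (hR2m : Measurable R2)
    (𝒴 : Finset ℝ) (hrange : ∀ ω, Y1 ω ∈ 𝒴)
    (hCI1 : ∀ x : 𝒳, 0 < pr μ {ω | X1 ω = x} → ∀ (r : Bool) (y : ℝ),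
      cpr μ {ω | R1 ω = r ∧ Y1 ω = y} {ω | X1 ω = x} =
        cpr μ {ω | R1 ω = r} {ω | X1 ω = x} * cpr μ {ω | Y1 ω = y} {ω | X1 ω = x})
    (hCI2a : ∀ y : ℝ, 0 < pr μ {ω | R1 ω = true ∧ Y1 ω = y} → ∀ (r : Bool) (x : 𝒳),
      cpr μ {ω | R2 ω = r ∧ X1 ω = x} {ω | R1 ω = true ∧ Y1 ω = y} =
        cpr μ {ω | R2 ω = r} {ω | R1 ω = true ∧ Y1 ω = y} *
          cpr μ {ω | X1 ω = x} {ω | R1 ω = true ∧ Y1 ω = y})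
    (hCI2b : ∀ (r : Bool) (y : ℝ) (x : 𝒳),
      cpr μ {ω | R2 ω = r ∧ Y1 ω = y ∧ X1 ω = x} {ω | R1 ω = false} =
        cpr μ {ω | R2 ω = r} {ω | R1 ω = false} *
          cpr μ {ω | Y1 ω = y ∧ X1 ω = x} {ω | R1 ω = false})
    (hpos1 : ∀ x : 𝒳, ∀ y ∈ 𝒴,
      0 < pr μ {ω | R1 ω = true ∧ R2 ω = true ∧ Y1 ω = y ∧ X1 ω = x})
    (hpos2 : 0 < pr μ {ω | R1 ω = false ∧ R2 ω = true}) :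
    (∑ y ∈ 𝒴, y * cpr μ {ω | Y1 ω = y} {ω | R1 ω = false}) =
      ∑ x : 𝒳, cpr μ {ω | X1 ω = x} {ω | R1 ω = false ∧ R2 ω = true} *
        ((∑ y ∈ 𝒴, y * cpr μ {ω | Y1 ω = y} {ω | R1 ω = true} *
            cpr μ {ω | X1 ω = x} {ω | R1 ω = true ∧ Y1 ω = y ∧ R2 ω = true}) /
          (∑ y ∈ 𝒴, cpr μ {ω | Y1 ω = y} {ω | R1 ω = true} *
            cpr μ {ω | X1 ω = x} {ω | R1 ω = true ∧ Y1 ω = y ∧ R2 ω = true})) := by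
  -- measurability of fibers
  have mY : ∀ y : ℝ, MeasurableSet {ω | Y1 ω = y} := fun y => hY1m (measurableSet_singleton y)
  have mX : ∀ x : 𝒳, MeasurableSet {ω | X1 ω = x} := fun x => hX1m (measurableSet_singleton x)
  have mR1 : ∀ b : Bool, MeasurableSet {ω | R1 ω = b} := fun b => hR1m (measurableSet_singleton b)
  have mR2 : ∀ b : Bool, MeasurableSet {ω | R2 ω = b} := fun b => hR2m (measurableSet_singleton b)
  -- a point of Ω, giving y0 ∈ 𝒴
  have hne : {ω | R1 ω = false ∧ R2 ω = true}.Nonempty := by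
    by_contra h
    rw [Set.not_nonempty_iff_eq_empty] at h
    rw [h] at hpos2
    simp [pr] at hpos2
  obtain ⟨ω0, -⟩ := hne
  have hy0 : Y1 ω0 ∈ 𝒴 := hrange ω0
  set y0 := Y1 ω0 with hy0def
  -- basic positivity
  have hP0 : 0 < pr μ {ω | R1 ω = false} :=
    pr_pos_mono μ (fun ω h => h.1) hpos2
  have hJpos : ∀ x : 𝒳, ∀ y ∈ 𝒴, 0 < pr μ {ω | R1 ω = true ∧ Y1 ω = y ∧ X1 ω = x} :=
    fun x y hy => pr_pos_mono μ (fun ω h => ⟨h.1, h.2.2⟩) (hpos1 x y hy)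
  have hJypos : ∀ y ∈ 𝒴, 0 < pr μ {ω | R1 ω = true ∧ Y1 ω = y} := by
    intro y hy
    exact pr_pos_mono μ (fun ω h => ⟨h.1, h.2.1⟩) (hJpos (X1 ω0) y hy)
  have hP1 : 0 < pr μ {ω | R1 ω = true} :=
    pr_pos_mono μ (fun ω h => h.1) (hJypos y0 hy0)
  have hKypos : ∀ y ∈ 𝒴, 0 < pr μ {ω | R1 ω = true ∧ Y1 ω = y ∧ R2 ω = true} := by
    intro y hy
    exact pr_pos_mono μ (fun ω h => ⟨h.1, h.2.2.1, h.2.1⟩) (hpos1 (X1 ω0) y hy)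
  -- (F1) conditional prob of X=x given R1=1, Y1=y, R2=1 equals J y x / Jy y
  have hc : ∀ (x : 𝒳), ∀ y ∈ 𝒴,
      cpr μ {ω | X1 ω = x} {ω | R1 ω = true ∧ Y1 ω = y ∧ R2 ω = true} =
        pr μ {ω | R1 ω = true ∧ Y1 ω = y ∧ X1 ω = x} /
          pr μ {ω | R1 ω = true ∧ Y1 ω = y} := by
    intro x y hy
    have h := hCI2a y (hJypos y hy) true x
    unfold cpr at h ⊢
    rw [show ({ω | R2 ω = true ∧ X1 ω = x} ∩ {ω | R1 ω = true ∧ Y1 ω = y}) =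
        {ω | R1 ω = true ∧ R2 ω = true ∧ Y1 ω = y ∧ X1 ω = x} from by
        ext ω; simp only [Set.mem_inter_iff, Set.mem_setOf_eq]; try tauto,
      show ({ω | R2 ω = true} ∩ {ω | R1 ω = true ∧ Y1 ω = y}) =
        {ω | R1 ω = true ∧ Y1 ω = y ∧ R2 ω = true} from by
        ext ω; simp only [Set.mem_inter_iff, Set.mem_setOf_eq]; try tauto,
      show ({ω | X1 ω = x} ∩ {ω | R1 ω = true ∧ Y1 ω = y}) =
        {ω | R1 ω = true ∧ Y1 ω = y ∧ X1 ω = x} from by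
        ext ω; simp only [Set.mem_inter_iff, Set.mem_setOf_eq]; try tauto] at h
    rw [show ({ω | X1 ω = x} ∩ {ω | R1 ω = true ∧ Y1 ω = y ∧ R2 ω = true}) =
        {ω | R1 ω = true ∧ R2 ω = true ∧ Y1 ω = y ∧ X1 ω = x} from by
        ext ω; simp only [Set.mem_inter_iff, Set.mem_setOf_eq]; try tauto]
    have hKy := hKypos y hy
    have hJy := hJypos y hy
    field_simp at h ⊢
    nlinarith [h]
  -- (F2) cpr of Y=y given R1=true
  have hq : ∀ y : ℝ, cpr μ {ω | Y1 ω = y} {ω | R1 ω = true} =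
      pr μ {ω | R1 ω = true ∧ Y1 ω = y} / pr μ {ω | R1 ω = true} := by
    intro y
    unfold cpr
    rw [show ({ω | Y1 ω = y} ∩ {ω | R1 ω = true}) = {ω | R1 ω = true ∧ Y1 ω = y} from by
      ext ω; simp only [Set.mem_inter_iff, Set.mem_setOf_eq]; try tauto]
  -- cpr of Y=y given R1=false
  have hL : ∀ y : ℝ, cpr μ {ω | Y1 ω = y} {ω | R1 ω = false} =
      pr μ {ω | R1 ω = false ∧ Y1 ω = y} / pr μ {ω | R1 ω = false} := by
    intro y
    unfold cpr
    rw [show ({ω | Y1 ω = y} ∩ {ω | R1 ω = false}) = {ω | R1 ω = false ∧ Y1 ω = y} from by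
      ext ω; simp only [Set.mem_inter_iff, Set.mem_setOf_eq]; try tauto]
  -- (F3) cpr of X=x given R1=false, R2=true
  have hG : ∀ x : 𝒳, cpr μ {ω | X1 ω = x} {ω | R1 ω = false ∧ R2 ω = true} =
      pr μ {ω | R1 ω = false ∧ X1 ω = x} / pr μ {ω | R1 ω = false} := by
    intro x
    have key : ∀ y : ℝ,
        pr μ {ω | R1 ω = false ∧ R2 ω = true ∧ Y1 ω = y ∧ X1 ω = x} *
          pr μ {ω | R1 ω = false} =
        pr μ {ω | R1 ω = false ∧ R2 ω = true} *
          pr μ {ω | R1 ω = false ∧ Y1 ω = y ∧ X1 ω = x} := by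
      intro y
      have h := hCI2b true y x
      unfold cpr at h
      rw [show ({ω | R2 ω = true ∧ Y1 ω = y ∧ X1 ω = x} ∩ {ω | R1 ω = false}) =
          {ω | R1 ω = false ∧ R2 ω = true ∧ Y1 ω = y ∧ X1 ω = x} from by
          ext ω; simp only [Set.mem_inter_iff, Set.mem_setOf_eq]; try tauto,
        show ({ω | R2 ω = true} ∩ {ω | R1 ω = false}) =
          {ω | R1 ω = false ∧ R2 ω = true} from by
          ext ω; simp only [Set.mem_inter_iff, Set.mem_setOf_eq]; try tauto,
        show ({ω | Y1 ω = y ∧ X1 ω = x} ∩ {ω | R1 ω = false}) =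
          {ω | R1 ω = false ∧ Y1 ω = y ∧ X1 ω = x} from by
          ext ω; simp only [Set.mem_inter_iff, Set.mem_setOf_eq]; try tauto] at h
      field_simp at h
      nlinarith [h]
    -- sum over y of the joint with R2 = true
    have hW : pr μ {ω | R1 ω = false ∧ R2 ω = true ∧ X1 ω = x} =
        ∑ y ∈ 𝒴, pr μ {ω | R1 ω = false ∧ R2 ω = true ∧ Y1 ω = y ∧ X1 ω = x} := by
      rw [pr_fiber_sum μ Y1 mY
        (show MeasurableSet {ω | R1 ω = false ∧ R2 ω = true ∧ X1 ω = x} from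
          (mR1 false).inter ((mR2 true).inter (mX x))) 𝒴 (fun ω _ => hrange ω)]
      refine Finset.sum_congr rfl fun y _ => congrArg (pr μ) ?_
      ext ω; simp only [Set.mem_inter_iff, Set.mem_setOf_eq]; try tauto
    have hGsum : pr μ {ω | R1 ω = false ∧ X1 ω = x} =
        ∑ y ∈ 𝒴, pr μ {ω | R1 ω = false ∧ Y1 ω = y ∧ X1 ω = x} := by
      rw [pr_fiber_sum μ Y1 mY
        (show MeasurableSet {ω | R1 ω = false ∧ X1 ω = x} from
          (mR1 false).inter (mX x)) 𝒴 (fun ω _ => hrange ω)]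
      refine Finset.sum_congr rfl fun y _ => congrArg (pr μ) ?_
      ext ω; simp only [Set.mem_inter_iff, Set.mem_setOf_eq]; try tauto
    have hsum : (∑ y ∈ 𝒴, pr μ {ω | R1 ω = false ∧ R2 ω = true ∧ Y1 ω = y ∧ X1 ω = x}) *
        pr μ {ω | R1 ω = false} =
        pr μ {ω | R1 ω = false ∧ R2 ω = true} *
          ∑ y ∈ 𝒴, pr μ {ω | R1 ω = false ∧ Y1 ω = y ∧ X1 ω = x} := by
      rw [Finset.sum_mul, Finset.mul_sum]
      exact Finset.sum_congr rfl fun y _ => key y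
    rw [← hW, ← hGsum] at hsum
    unfold cpr
    rw [show ({ω | X1 ω = x} ∩ {ω | R1 ω = false ∧ R2 ω = true}) =
        {ω | R1 ω = false ∧ R2 ω = true ∧ X1 ω = x} from by
        ext ω; simp only [Set.mem_inter_iff, Set.mem_setOf_eq]; try tauto]
    field_simp
    linarith [hsum]
  -- partition of the conditional joint over x for the LHS
  have hA : ∀ y : ℝ, pr μ {ω | R1 ω = false ∧ Y1 ω = y} =
      ∑ x : 𝒳, pr μ {ω | R1 ω = false ∧ Y1 ω = y ∧ X1 ω = x} := by
    intro y
    rw [pr_fiber_sum μ X1 mX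
      (show MeasurableSet {ω | R1 ω = false ∧ Y1 ω = y} from
        (mR1 false).inter (mY y)) Finset.univ (fun ω _ => Finset.mem_univ _)]
    refine Finset.sum_congr rfl fun x _ => congrArg (pr μ) ?_
    ext ω; simp only [Set.mem_inter_iff, Set.mem_setOf_eq]; try tauto
  -- partition of {R1 = true ∧ X = x} over y
  have hsumJ : ∀ x : 𝒳, ∑ y ∈ 𝒴, pr μ {ω | R1 ω = true ∧ Y1 ω = y ∧ X1 ω = x} =
      pr μ {ω | R1 ω = true ∧ X1 ω = x} := by
    intro x
    rw [pr_fiber_sum μ Y1 mY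
      (show MeasurableSet {ω | R1 ω = true ∧ X1 ω = x} from
        (mR1 true).inter (mX x)) 𝒴 (fun ω _ => hrange ω)]
    refine (Finset.sum_congr rfl fun y _ => congrArg (pr μ) ?_).symm
    ext ω; simp only [Set.mem_inter_iff, Set.mem_setOf_eq]; try tauto
  -- main computation
  calc (∑ y ∈ 𝒴, y * cpr μ {ω | Y1 ω = y} {ω | R1 ω = false})
      = ∑ y ∈ 𝒴, ∑ x : 𝒳,
          y * pr μ {ω | R1 ω = false ∧ Y1 ω = y ∧ X1 ω = x} / pr μ {ω | R1 ω = false} := by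
        refine Finset.sum_congr rfl fun y _ => ?_
        rw [hL y, hA y, Finset.sum_div, Finset.mul_sum]
        exact Finset.sum_congr rfl fun x _ => (mul_div_assoc _ _ _).symm
    _ = ∑ x : 𝒳, ∑ y ∈ 𝒴,
          y * pr μ {ω | R1 ω = false ∧ Y1 ω = y ∧ X1 ω = x} / pr μ {ω | R1 ω = false} :=
        Finset.sum_comm
    _ = ∑ x : 𝒳, (∑ y ∈ 𝒴, y * pr μ {ω | R1 ω = false ∧ Y1 ω = y ∧ X1 ω = x}) /
          pr μ {ω | R1 ω = false} := by
        exact Finset.sum_congr rfl fun x _ => (Finset.sum_div _ _ _).symm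
    _ = ∑ x : 𝒳, pr μ {ω | R1 ω = false ∧ X1 ω = x} / pr μ {ω | R1 ω = false} *
          ((∑ y ∈ 𝒴, y * pr μ {ω | R1 ω = true ∧ Y1 ω = y ∧ X1 ω = x}) /
            (∑ y ∈ 𝒴, pr μ {ω | R1 ω = true ∧ Y1 ω = y ∧ X1 ω = x})) := by
        refine Finset.sum_congr rfl fun x _ => ?_
        -- per-x identification
        have hDx : 0 < ∑ y ∈ 𝒴, pr μ {ω | R1 ω = true ∧ Y1 ω = y ∧ X1 ω = x} := by
          refine lt_of_lt_of_le (hJpos x y0 hy0) ?_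
          exact Finset.single_le_sum
            (f := fun y => pr μ {ω | R1 ω = true ∧ Y1 ω = y ∧ X1 ω = x})
            (fun y _ => pr_nonneg μ _) hy0
        rcases eq_or_lt_of_le (pr_nonneg μ {ω | R1 ω = false ∧ X1 ω = x}) with h0 | hGx
        · -- P(R1=0, X=x) = 0 : both sides vanish
          have hM0 : ∀ y : ℝ, pr μ {ω | R1 ω = false ∧ Y1 ω = y ∧ X1 ω = x} = 0 :=
            fun y => pr_eq_zero_of_le μ
              (show {ω | R1 ω = false ∧ Y1 ω = y ∧ X1 ω = x} ⊆
                  {ω | R1 ω = false ∧ X1 ω = x} from fun ω h => ⟨h.1, h.2.2⟩) h0.symm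
          rw [← h0]
          simp [hM0]
        · -- P(R1=0, X=x) > 0 : use CI1
          have hPx : 0 < pr μ {ω | X1 ω = x} :=
            pr_pos_mono μ (fun ω h => h.2) hGx
          have hR1x : 0 < pr μ {ω | R1 ω = true ∧ X1 ω = x} :=
            pr_pos_mono μ (fun ω h => ⟨h.1, h.2.2⟩) (hJpos x y0 hy0)
          have hCI1' : ∀ (r : Bool) (y : ℝ),
              pr μ {ω | R1 ω = r ∧ Y1 ω = y ∧ X1 ω = x} * pr μ {ω | X1 ω = x} =
                pr μ {ω | R1 ω = r ∧ X1 ω = x} * pr μ ({ω | Y1 ω = y} ∩ {ω | X1 ω = x}) := by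
            intro r y
            have h := hCI1 x hPx r y
            unfold cpr at h
            rw [show ({ω | R1 ω = r ∧ Y1 ω = y} ∩ {ω | X1 ω = x}) =
                {ω | R1 ω = r ∧ Y1 ω = y ∧ X1 ω = x} from by
                ext ω; simp only [Set.mem_inter_iff, Set.mem_setOf_eq]; try tauto,
              show ({ω | R1 ω = r} ∩ {ω | X1 ω = x}) = {ω | R1 ω = r ∧ X1 ω = x} from by
                ext ω; simp only [Set.mem_inter_iff, Set.mem_setOf_eq]; try tauto] at h
            field_simp at h
            nlinarith [h]
          have hM0eq : ∀ y : ℝ, pr μ {ω | R1 ω = false ∧ Y1 ω = y ∧ X1 ω = x} =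
              pr μ {ω | R1 ω = false ∧ X1 ω = x} * pr μ ({ω | Y1 ω = y} ∩ {ω | X1 ω = x}) /
                pr μ {ω | X1 ω = x} := by
            intro y
            rw [eq_div_iff hPx.ne']
            exact hCI1' false y
          have hJeq : ∀ y : ℝ, pr μ {ω | R1 ω = true ∧ Y1 ω = y ∧ X1 ω = x} =
              pr μ {ω | R1 ω = true ∧ X1 ω = x} * pr μ ({ω | Y1 ω = y} ∩ {ω | X1 ω = x}) /
                pr μ {ω | X1 ω = x} := by
            intro y
            rw [eq_div_iff hPx.ne']
            exact hCI1' true y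
          have h1 : ∑ y ∈ 𝒴, y * pr μ {ω | R1 ω = false ∧ Y1 ω = y ∧ X1 ω = x} =
              pr μ {ω | R1 ω = false ∧ X1 ω = x} / pr μ {ω | X1 ω = x} *
                ∑ y ∈ 𝒴, y * pr μ ({ω | Y1 ω = y} ∩ {ω | X1 ω = x}) := by
            rw [Finset.mul_sum]
            refine Finset.sum_congr rfl fun y _ => ?_
            rw [hM0eq y]; ring
          have h2 : ∑ y ∈ 𝒴, y * pr μ {ω | R1 ω = true ∧ Y1 ω = y ∧ X1 ω = x} =
              pr μ {ω | R1 ω = true ∧ X1 ω = x} / pr μ {ω | X1 ω = x} *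
                ∑ y ∈ 𝒴, y * pr μ ({ω | Y1 ω = y} ∩ {ω | X1 ω = x}) := by
            rw [Finset.mul_sum]
            refine Finset.sum_congr rfl fun y _ => ?_
            rw [hJeq y]; ring
          rw [h1, h2, hsumJ x]
          field_simp
    _ = ∑ x : 𝒳, cpr μ {ω | X1 ω = x} {ω | R1 ω = false ∧ R2 ω = true} *
        ((∑ y ∈ 𝒴, y * cpr μ {ω | Y1 ω = y} {ω | R1 ω = true} *
            cpr μ {ω | X1 ω = x} {ω | R1 ω = true ∧ Y1 ω = y ∧ R2 ω = true}) /
          (∑ y ∈ 𝒴, cpr μ {ω | Y1 ω = y} {ω | R1 ω = true} *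
            cpr μ {ω | X1 ω = x} {ω | R1 ω = true ∧ Y1 ω = y ∧ R2 ω = true})) := by
        refine Finset.sum_congr rfl fun x _ => ?_
        rw [hG x]
        congr 1
        have hnum : ∑ y ∈ 𝒴, y * cpr μ {ω | Y1 ω = y} {ω | R1 ω = true} *
            cpr μ {ω | X1 ω = x} {ω | R1 ω = true ∧ Y1 ω = y ∧ R2 ω = true} =
            (∑ y ∈ 𝒴, y * pr μ {ω | R1 ω = true ∧ Y1 ω = y ∧ X1 ω = x}) /
              pr μ {ω | R1 ω = true} := by
          rw [Finset.sum_div]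
          refine Finset.sum_congr rfl fun y hy => ?_
          rw [hq y, hc x y hy]
          have h1 := (hJypos y hy).ne'
          have h2 := hP1.ne'
          field_simp
        have hden : ∑ y ∈ 𝒴, cpr μ {ω | Y1 ω = y} {ω | R1 ω = true} *
            cpr μ {ω | X1 ω = x} {ω | R1 ω = true ∧ Y1 ω = y ∧ R2 ω = true} =
            (∑ y ∈ 𝒴, pr μ {ω | R1 ω = true ∧ Y1 ω = y ∧ X1 ω = x}) /
              pr μ {ω | R1 ω = true} := by
          rw [Finset.sum_div]
          refine Finset.sum_congr rfl fun y hy => ?_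
          rw [hq y, hc x y hy]
          have h1 := (hJypos y hy).ne'
          have h2 := hP1.ne'
          field_simp
        have hDx : 0 < ∑ y ∈ 𝒴, pr μ {ω | R1 ω = true ∧ Y1 ω = y ∧ X1 ω = x} := by
          refine lt_of_lt_of_le (hJpos x y0 hy0) ?_
          exact Finset.single_le_sum
            (f := fun y => pr μ {ω | R1 ω = true ∧ Y1 ω = y ∧ X1 ω = x})
            (fun y _ => pr_nonneg μ _) hy0
        rw [hnum, hden, div_div_div_comm, div_self hP1.ne', div_one]
end

section
/- Let P be a regular observed-data distribution, with nuisance functions ζ, α, β, γ, δ and target θ(P). Define, for an observation o = (x, y, r₁, r₂), φ(o; P) = (1/P(R₁=0, R₂=1)) [ (1−r₁)r₂ (β(x)/α(x) − θ(P)) + (r₁/α(x)) (r₂/ζ(y)) ((1−γ(x))/γ(x)) (y − β(x)/α(x)) − r₁ (r₂/ζ(y) − 1) δ(y) ]. Then E_P[φ(O; P)] = 0. -/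
open Finset

/-- The real value (`0` or `1`) of a bit. -/
noncomputable def bR (r : Bool) : ℝ := if r then 1 else 0

/-- A regular observed-data distribution of `O = (X, Y, R₁, R₂)` on `𝒳 × 𝒴 × {0,1} × {0,1}`
(`Bool`-valued indicators, `true = 1`): a probability mass function with every point of
positive probability. -/
def Regular {𝒳 : Type*} [Fintype 𝒳] (𝒴 : Finset ℝ) (p : 𝒳 → ℝ → Bool → Bool → ℝ) : Prop :=
  (∑ x : 𝒳, ∑ y ∈ 𝒴, ∑ r₁ : Bool, ∑ r₂ : Bool, p x y r₁ r₂) = 1 ∧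
    ∀ (x : 𝒳), ∀ y ∈ 𝒴, ∀ (r₁ r₂ : Bool), 0 < p x y r₁ r₂

/-- `P(R₁ = r₁, R₂ = r₂)`. -/
noncomputable def prR {𝒳 : Type*} [Fintype 𝒳] (𝒴 : Finset ℝ)
    (p : 𝒳 → ℝ → Bool → Bool → ℝ) (r₁ r₂ : Bool) : ℝ :=
  ∑ x : 𝒳, ∑ y ∈ 𝒴, p x y r₁ r₂

/-- `ζ(y) = P(R₂ = 1 | R₁ = 1, Y = y)`. -/
noncomputable def zetaD {𝒳 : Type*} [Fintype 𝒳] (p : 𝒳 → ℝ → Bool → Bool → ℝ) (y : ℝ) : ℝ :=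
  (∑ x : 𝒳, p x y true true) / (∑ x : 𝒳, ∑ r₂ : Bool, p x y true r₂)

/-- `α(x) = E(1/ζ(Y) | R₁ = 1, R₂ = 1, X = x)`. -/
noncomputable def alphaD {𝒳 : Type*} [Fintype 𝒳] (𝒴 : Finset ℝ)
    (p : 𝒳 → ℝ → Bool → Bool → ℝ) (x : 𝒳) : ℝ :=
  ∑ y ∈ 𝒴, (1 / zetaD p y) * (p x y true true / ∑ y' ∈ 𝒴, p x y' true true)

/-- `β(x) = E(Y/ζ(Y) | R₁ = 1, R₂ = 1, X = x)`. -/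
noncomputable def betaD {𝒳 : Type*} [Fintype 𝒳] (𝒴 : Finset ℝ)
    (p : 𝒳 → ℝ → Bool → Bool → ℝ) (x : 𝒳) : ℝ :=
  ∑ y ∈ 𝒴, (y / zetaD p y) * (p x y true true / ∑ y' ∈ 𝒴, p x y' true true)

/-- `γ(x) = P(R₁ = 1 | R₂ = 1, X = x)`. -/
noncomputable def gammaD {𝒳 : Type*} [Fintype 𝒳] (𝒴 : Finset ℝ)
    (p : 𝒳 → ℝ → Bool → Bool → ℝ) (x : 𝒳) : ℝ :=
  (∑ y ∈ 𝒴, p x y true true) / (∑ y ∈ 𝒴, ∑ r₁ : Bool, p x y r₁ true)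

/-- `δ(y) = E((1/α(X)) ((1−γ(X))/γ(X)) (Y − β(X)/α(X)) | R₁ = 1, R₂ = 1, Y = y)`. -/
noncomputable def deltaD {𝒳 : Type*} [Fintype 𝒳] (𝒴 : Finset ℝ)
    (p : 𝒳 → ℝ → Bool → Bool → ℝ) (y : ℝ) : ℝ :=
  ∑ x : 𝒳, (1 / alphaD 𝒴 p x) * ((1 - gammaD 𝒴 p x) / gammaD 𝒴 p x) *
    (y - betaD 𝒴 p x / alphaD 𝒴 p x) * (p x y true true / ∑ x' : 𝒳, p x' y true true)

/-- `θ(P) = E(β(X)/α(X) | R₁ = 0, R₂ = 1)`. -/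
noncomputable def thetaD {𝒳 : Type*} [Fintype 𝒳] (𝒴 : Finset ℝ)
    (p : 𝒳 → ℝ → Bool → Bool → ℝ) : ℝ :=
  ∑ x : 𝒳, (betaD 𝒴 p x / alphaD 𝒴 p x) *
    ((∑ y ∈ 𝒴, p x y false true) / prR 𝒴 p false true)

/-- The influence function `φ(o; P)` of `θ` at the observation `o = (x, y, r₁, r₂)`. -/
noncomputable def phiD {𝒳 : Type*} [Fintype 𝒳] (𝒴 : Finset ℝ)
    (p : 𝒳 → ℝ → Bool → Bool → ℝ) (x : 𝒳) (y : ℝ) (r₁ r₂ : Bool) : ℝ :=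
  (1 / prR 𝒴 p false true) *
    ((1 - bR r₁) * bR r₂ * (betaD 𝒴 p x / alphaD 𝒴 p x - thetaD 𝒴 p) +
      (bR r₁ / alphaD 𝒴 p x) * (bR r₂ / zetaD p y) *
        ((1 - gammaD 𝒴 p x) / gammaD 𝒴 p x) * (y - betaD 𝒴 p x / alphaD 𝒴 p x) -
      bR r₁ * (bR r₂ / zetaD p y - 1) * deltaD 𝒴 p y)

/-- **The influence function has mean zero.**
For a regular observed-data distribution `P`, with nuisances `ζ, α, β, γ, δ` and target
`θ(P) = E(β(X)/α(X) | R₁ = 0, R₂ = 1)`, the influence function `φ(·; P)` satisfies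
`E_P[φ(O; P)] = 0`. -/
theorem stmt8
    {𝒳 : Type*} [Fintype 𝒳] (𝒴 : Finset ℝ)
    (p : 𝒳 → ℝ → Bool → Bool → ℝ) (hp : Regular 𝒴 p) :
    (∑ x : 𝒳, ∑ y ∈ 𝒴, ∑ r₁ : Bool, ∑ r₂ : Bool,
      p x y r₁ r₂ * phiD 𝒴 p x y r₁ r₂) = 0 := by
  obtain ⟨hsum, hpos⟩ := hp
  have hX : Nonempty 𝒳 := by
    by_contra h
    rw [not_nonempty_iff] at h
    rw [Finset.univ_eq_empty, Finset.sum_empty] at hsum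
    norm_num at hsum
  have hY : 𝒴.Nonempty := by
    rcases 𝒴.eq_empty_or_nonempty with h | h
    · rw [h] at hsum; simp at hsum
    · exact h
  have hs : ∀ y ∈ 𝒴, 0 < ∑ x : 𝒳, p x y true true := fun y hy =>
    Finset.sum_pos (fun x _ => hpos x y hy true true) Finset.univ_nonempty
  have ht : ∀ y ∈ 𝒴, 0 < ∑ x : 𝒳, ∑ r₂ : Bool, p x y true r₂ := fun y hy =>
    Finset.sum_pos (fun x _ => Finset.sum_pos (fun r _ => hpos x y hy true r)
      Finset.univ_nonempty) Finset.univ_nonempty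
  have hζ : ∀ y ∈ 𝒴, 0 < zetaD p y := fun y hy => div_pos (hs y hy) (ht y hy)
  have hS : ∀ x : 𝒳, 0 < ∑ y ∈ 𝒴, p x y true true := fun x =>
    Finset.sum_pos (fun y hy => hpos x y hy true true) hY
  have hα : ∀ x : 𝒳, 0 < alphaD 𝒴 p x := fun x =>
    Finset.sum_pos (fun y hy => mul_pos (one_div_pos.mpr (hζ y hy))
      (div_pos (hpos x y hy true true) (hS x))) hY
  have hγ : ∀ x : 𝒳, 0 < gammaD 𝒴 p x := fun x =>
    div_pos (hS x) (Finset.sum_pos (fun y hy => Finset.sum_pos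
      (fun r _ => hpos x y hy r true) Finset.univ_nonempty) hY)
  have hprR : 0 < prR 𝒴 p false true :=
    Finset.sum_pos (fun x _ => Finset.sum_pos (fun y hy => hpos x y hy false true) hY)
      Finset.univ_nonempty
  -- identities
  have hαS : ∀ x : 𝒳, ∑ y ∈ 𝒴, (1 / zetaD p y) * p x y true true
      = alphaD 𝒴 p x * (∑ y ∈ 𝒴, p x y true true) := by
    intro x
    rw [alphaD, Finset.sum_mul]
    refine Finset.sum_congr rfl fun y hy => ?_
    rw [mul_assoc, div_mul_cancel₀ _ (hS x).ne']
  have hβS : ∀ x : 𝒳, ∑ y ∈ 𝒴, (y / zetaD p y) * p x y true true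
      = betaD 𝒴 p x * (∑ y ∈ 𝒴, p x y true true) := by
    intro x
    rw [betaD, Finset.sum_mul]
    refine Finset.sum_congr rfl fun y hy => ?_
    rw [mul_assoc, div_mul_cancel₀ _ (hS x).ne']
  have hθ : ∑ x : 𝒳, (∑ y ∈ 𝒴, p x y false true) * (betaD 𝒴 p x / alphaD 𝒴 p x)
      = thetaD 𝒴 p * prR 𝒴 p false true := by
    rw [thetaD, Finset.sum_mul]
    refine Finset.sum_congr rfl fun x _ => ?_
    rw [mul_assoc, div_mul_cancel₀ _ hprR.ne', mul_comm]
  have hζs : ∀ y ∈ 𝒴, (∑ x : 𝒳, p x y true true) * (1 / zetaD p y)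
      = (∑ x : 𝒳, p x y true true) + (∑ x : 𝒳, p x y true false) := by
    intro y hy
    have htss : (∑ x : 𝒳, ∑ r₂ : Bool, p x y true r₂)
        = (∑ x : 𝒳, p x y true true) + (∑ x : 𝒳, p x y true false) := by
      simp [Fintype.sum_bool, Finset.sum_add_distrib]
    rw [← htss, zetaD, one_div_div, mul_comm, div_mul_cancel₀ _ (hs y hy).ne']
  -- rewrite the summand
  have key : ∀ (x : 𝒳) (y : ℝ), (∑ r₁ : Bool, ∑ r₂ : Bool,
        p x y r₁ r₂ * phiD 𝒴 p x y r₁ r₂)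
      = (1 / prR 𝒴 p false true) *
        (p x y false true * (betaD 𝒴 p x / alphaD 𝒴 p x - thetaD 𝒴 p)
        + p x y true true * ((1 / alphaD 𝒴 p x) * (1 / zetaD p y) *
            ((1 - gammaD 𝒴 p x) / gammaD 𝒴 p x) * (y - betaD 𝒴 p x / alphaD 𝒴 p x))
        + (p x y true false - p x y true true * (1 / zetaD p y - 1)) * deltaD 𝒴 p y) := by
    intro x y
    simp only [Fintype.sum_bool, phiD, bR]
    norm_num
    ring
  have hA : (∑ x : 𝒳, ∑ y ∈ 𝒴,
      p x y false true * (betaD 𝒴 p x / alphaD 𝒴 p x - thetaD 𝒴 p)) = 0 := by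
    have e : ∀ x : 𝒳, ∑ y ∈ 𝒴,
        p x y false true * (betaD 𝒴 p x / alphaD 𝒴 p x - thetaD 𝒴 p)
        = (∑ y ∈ 𝒴, p x y false true) * (betaD 𝒴 p x / alphaD 𝒴 p x)
          - (∑ y ∈ 𝒴, p x y false true) * thetaD 𝒴 p := by
      intro x
      rw [← Finset.sum_mul]
      ring
    simp_rw [e]
    rw [Finset.sum_sub_distrib, hθ, ← Finset.sum_mul]
    rw [show (∑ x : 𝒳, ∑ y ∈ 𝒴, p x y false true) = prR 𝒴 p false true from rfl]
    ring
  have hB : ∀ x : 𝒳, (∑ y ∈ 𝒴, p x y true true * ((1 / alphaD 𝒴 p x) * (1 / zetaD p y) *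
      ((1 - gammaD 𝒴 p x) / gammaD 𝒴 p x) * (y - betaD 𝒴 p x / alphaD 𝒴 p x))) = 0 := by
    intro x
    have e : ∀ y : ℝ, p x y true true * ((1 / alphaD 𝒴 p x) * (1 / zetaD p y) *
        ((1 - gammaD 𝒴 p x) / gammaD 𝒴 p x) * (y - betaD 𝒴 p x / alphaD 𝒴 p x))
        = ((1 / alphaD 𝒴 p x) * ((1 - gammaD 𝒴 p x) / gammaD 𝒴 p x))
            * ((y / zetaD p y) * p x y true true)
          - ((1 / alphaD 𝒴 p x) * ((1 - gammaD 𝒴 p x) / gammaD 𝒴 p x)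
              * (betaD 𝒴 p x / alphaD 𝒴 p x)) * ((1 / zetaD p y) * p x y true true) :=
      fun y => by ring
    simp_rw [e]
    rw [Finset.sum_sub_distrib, ← Finset.mul_sum, ← Finset.mul_sum, hβS x, hαS x]
    field_simp [(hα x).ne', (hγ x).ne']
    ring
  have hC : (∑ x : 𝒳, ∑ y ∈ 𝒴,
      (p x y true false - p x y true true * (1 / zetaD p y - 1)) * deltaD 𝒴 p y) = 0 := by
    rw [Finset.sum_comm]
    refine Finset.sum_eq_zero fun y hy => ?_
    rw [← Finset.sum_mul]
    have hz : (∑ x : 𝒳, (p x y true false - p x y true true * (1 / zetaD p y - 1))) = 0 := by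
      rw [Finset.sum_sub_distrib, ← Finset.sum_mul]
      linear_combination -(hζs y hy)
    rw [hz, zero_mul]
  calc (∑ x : 𝒳, ∑ y ∈ 𝒴, ∑ r₁ : Bool, ∑ r₂ : Bool, p x y r₁ r₂ * phiD 𝒴 p x y r₁ r₂)
      = ∑ x : 𝒳, ∑ y ∈ 𝒴, (1 / prR 𝒴 p false true) *
        (p x y false true * (betaD 𝒴 p x / alphaD 𝒴 p x - thetaD 𝒴 p)
        + p x y true true * ((1 / alphaD 𝒴 p x) * (1 / zetaD p y) *
            ((1 - gammaD 𝒴 p x) / gammaD 𝒴 p x) * (y - betaD 𝒴 p x / alphaD 𝒴 p x))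
        + (p x y true false - p x y true true * (1 / zetaD p y - 1)) * deltaD 𝒴 p y) := by
        exact Finset.sum_congr rfl fun x _ => Finset.sum_congr rfl fun y _ => key x y
    _ = 0 := by
        simp_rw [← Finset.mul_sum, Finset.sum_add_distrib]
        rw [hA, hC, Finset.sum_eq_zero fun x _ => hB x]
        ring
end

section
/- Let P be a regular binary-outcome observed-data distribution. Define ρ = odds_P(Y=1 | R₁=1, R₂=1) / odds_P(Y=1 | R₁=1) and ξ(x) = odds_P(Y=1 | X=x, R₁=1, R₂=1), where odds(Y=1 | C) = P(Y=1 | C)/P(Y=0 | C). Define ζ(y) = P(R₂=1 | R₁=1, Y=y), α(x) = E(1/ζ(Y) | R₁=1, R₂=1, X=x), and β(x) = E(Y/ζ(Y) | R₁=1, R₂=1, X=x). Then E( β(X)/α(X) | R₁=0, R₂=1 ) = E( ξ(X)/(ρ + ξ(X)) | R₁=0, R₂=1 ). -/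
open Finset

/-- A regular binary-outcome observed-data distribution of `O = (X, Y, R₁, R₂)` on
`𝒳 × {0,1} × {0,1} × {0,1}` (`Bool`-valued, `true = 1`): a probability mass function with
every point of positive probability. -/
def RegularB {𝒳 : Type*} [Fintype 𝒳] (p : 𝒳 → Bool → Bool → Bool → ℝ) : Prop :=
  (∑ x : 𝒳, ∑ y : Bool, ∑ r₁ : Bool, ∑ r₂ : Bool, p x y r₁ r₂) = 1 ∧
    ∀ (x : 𝒳) (y r₁ r₂ : Bool), 0 < p x y r₁ r₂

/-- `P(R₁ = r₁, R₂ = r₂)`. -/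
noncomputable def pRB {𝒳 : Type*} [Fintype 𝒳] (p : 𝒳 → Bool → Bool → Bool → ℝ)
    (r₁ r₂ : Bool) : ℝ :=
  ∑ x : 𝒳, ∑ y : Bool, p x y r₁ r₂

/-- `P(X = x | R₁ = r₁, R₂ = r₂)`. -/
noncomputable def pXB {𝒳 : Type*} [Fintype 𝒳] (p : 𝒳 → Bool → Bool → Bool → ℝ)
    (r₁ r₂ : Bool) (x : 𝒳) : ℝ :=
  (∑ y : Bool, p x y r₁ r₂) / pRB p r₁ r₂

/-- `μ(x) = P(Y = 1 | X = x, R₁ = 1, R₂ = 1)`. -/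
noncomputable def muB {𝒳 : Type*} [Fintype 𝒳] (p : 𝒳 → Bool → Bool → Bool → ℝ) (x : 𝒳) : ℝ :=
  p x true true true / (∑ y : Bool, p x y true true)

/-- `ξ(x) = μ(x)/(1 − μ(x))`, the conditional odds `odds(Y = 1 | X = x, R₁ = 1, R₂ = 1)`. -/
noncomputable def xiB {𝒳 : Type*} [Fintype 𝒳] (p : 𝒳 → Bool → Bool → Bool → ℝ) (x : 𝒳) : ℝ :=
  muB p x / (1 - muB p x)

/-- The density ratio `ϖ(x) = P(X = x | R₁ = 0, R₂ = 1) / P(X = x | R₁ = 1, R₂ = 1)`. -/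
noncomputable def varpiB {𝒳 : Type*} [Fintype 𝒳] (p : 𝒳 → Bool → Bool → Bool → ℝ) (x : 𝒳) : ℝ :=
  pXB p false true x / pXB p true true x

/-- `θ_ρ(Q) = E_Q(ξ(X)/(ρ + ξ(X)) | R₁ = 0, R₂ = 1)`. -/
noncomputable def thetaB {𝒳 : Type*} [Fintype 𝒳] (ρ : ℝ)
    (p : 𝒳 → Bool → Bool → Bool → ℝ) : ℝ :=
  ∑ x : 𝒳, (xiB p x / (ρ + xiB p x)) * pXB p false true x

/-- The influence function `φ_ρ(o; Q)` at the observation `o = (x, y, r₁, r₂)`. -/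
noncomputable def phiB {𝒳 : Type*} [Fintype 𝒳] (ρ : ℝ)
    (p : 𝒳 → Bool → Bool → Bool → ℝ) (x : 𝒳) (y r₁ r₂ : Bool) : ℝ :=
  ρ * ((1 + xiB p x) / (ρ + xiB p x)) ^ 2 *
      (bR r₁ * bR r₂ * varpiB p x / pRB p true true) * (bR y - muB p x) +
    ((1 - bR r₁) * bR r₂ / pRB p false true) * (xiB p x / (ρ + xiB p x) - thetaB ρ p)

/-- `odds(Y = 1 | R₁ = 1, R₂ = 1)`. -/
noncomputable def odds11 {𝒳 : Type*} [Fintype 𝒳] (p : 𝒳 → Bool → Bool → Bool → ℝ) : ℝ :=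
  (∑ x : 𝒳, p x true true true) / (∑ x : 𝒳, p x false true true)

/-- `odds(Y = 1 | R₁ = 1)`. -/
noncomputable def odds1 {𝒳 : Type*} [Fintype 𝒳] (p : 𝒳 → Bool → Bool → Bool → ℝ) : ℝ :=
  (∑ x : 𝒳, ∑ r₂ : Bool, p x true true r₂) / (∑ x : 𝒳, ∑ r₂ : Bool, p x false true r₂)

/-- `ξ(x) = odds(Y = 1 | X = x, R₁ = 1, R₂ = 1)`. -/
noncomputable def oddsX {𝒳 : Type*} [Fintype 𝒳] (p : 𝒳 → Bool → Bool → Bool → ℝ) (x : 𝒳) : ℝ :=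
  p x true true true / p x false true true

/-- `ζ(y) = P(R₂ = 1 | R₁ = 1, Y = y)`. -/
noncomputable def zetaB {𝒳 : Type*} [Fintype 𝒳] (p : 𝒳 → Bool → Bool → Bool → ℝ)
    (y : Bool) : ℝ :=
  (∑ x : 𝒳, p x y true true) / (∑ x : 𝒳, ∑ r₂ : Bool, p x y true r₂)

/-- `α(x) = E(1/ζ(Y) | R₁ = 1, R₂ = 1, X = x)`. -/
noncomputable def alphaB {𝒳 : Type*} [Fintype 𝒳] (p : 𝒳 → Bool → Bool → Bool → ℝ)
    (x : 𝒳) : ℝ :=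
  ∑ y : Bool, (1 / zetaB p y) * (p x y true true / ∑ y' : Bool, p x y' true true)

/-- `β(x) = E(Y/ζ(Y) | R₁ = 1, R₂ = 1, X = x)`. -/
noncomputable def betaB {𝒳 : Type*} [Fintype 𝒳] (p : 𝒳 → Bool → Bool → Bool → ℝ)
    (x : 𝒳) : ℝ :=
  ∑ y : Bool, (bR y / zetaB p y) * (p x y true true / ∑ y' : Bool, p x y' true true)

private lemma stmt9_aux {𝒳 : Type*} [Fintype 𝒳] (p : 𝒳 → Bool → Bool → Bool → ℝ)
    (hpos : ∀ (x : 𝒳) (y r₁ r₂ : Bool), 0 < p x y r₁ r₂) (x : 𝒳) :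
    (∑ y : Bool, (if y then (1:ℝ) else 0) / ((∑ x, p x y true true) / (∑ x, ∑ r₂ : Bool, p x y true r₂)) * (p x y true true / ∑ y' : Bool, p x y' true true))
    /
    (∑ y : Bool, (1:ℝ) / ((∑ x, p x y true true) / (∑ x, ∑ r₂ : Bool, p x y true r₂)) * (p x y true true / ∑ y' : Bool, p x y' true true))
    =
    (p x true true true / p x false true true) /
      (((∑ x, p x true true true) / (∑ x, p x false true true)) /
        ((∑ x, ∑ r₂ : Bool, p x true true r₂) / (∑ x, ∑ r₂ : Bool, p x false true r₂))
        + p x true true true / p x false true true) := by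
  have ha := hpos x true true true
  have hb := hpos x false true true
  have hne : (Finset.univ : Finset 𝒳).Nonempty := ⟨x, Finset.mem_univ x⟩
  have hc1 : 0 < ∑ x, p x true true true := Finset.sum_pos (fun i _ => hpos i true true true) hne
  have hc0 : 0 < ∑ x, p x false true true := Finset.sum_pos (fun i _ => hpos i false true true) hne
  have hd1 : 0 < ∑ x, (p x true true true + p x true true false) :=
    Finset.sum_pos (fun i _ => by have := hpos i true true true; have := hpos i true true false; linarith) hne
  have hd0 : 0 < ∑ x, (p x false true true + p x false true false) :=
    Finset.sum_pos (fun i _ => by have := hpos i false true true; have := hpos i false true false; linarith) hne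
  simp only [Fintype.sum_bool, if_true, if_false, Bool.false_eq_true]
  have hs : 0 < p x true true true + p x false true true := by linarith
  rw [div_eq_div_iff (by positivity) (by positivity)]
  field_simp
  ring

/-- **Binary-outcome identification (Corollary 1 of the discussion).**
For a regular binary-outcome observed-data distribution, with
`ρ = odds(Y=1 | R₁=1, R₂=1)/odds(Y=1 | R₁=1)` and `ξ(x) = odds(Y=1 | X=x, R₁=1, R₂=1)`,
one has `E(β(X)/α(X) | R₁=0, R₂=1) = E(ξ(X)/(ρ + ξ(X)) | R₁=0, R₂=1)`. -/
theorem stmt9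
    {𝒳 : Type*} [Fintype 𝒳] (p : 𝒳 → Bool → Bool → Bool → ℝ) (hp : RegularB p) :
    (∑ x : 𝒳, (betaB p x / alphaB p x) * pXB p false true x) =
      ∑ x : 𝒳, (oddsX p x / (odds11 p / odds1 p + oddsX p x)) * pXB p false true x := by
  
  refine Finset.sum_congr rfl fun x _ => ?_
  congr 1
  simp only [betaB, alphaB, zetaB, oddsX, odds11, odds1, bR]
  exact stmt9_aux p hp.2 x
end

section
/- Fix ρ > 0 and let P and P̄ be two regular binary-outcome observed-data distributions. For a distribution Q define μ_Q(x) = Q(Y=1 | X=x, R₁=1, R₂=1), ξ_Q(x) = μ_Q(x)/(1−μ_Q(x)), ϖ_Q(x) = Q(X=x | R₁=0, R₂=1)/Q(X=x | R₁=1, R₂=1), θ_ρ(Q) = E_Q( ξ_Q(X)/(ρ + ξ_Q(X)) | R₁=0, R₂=1 ), and for o = (x, y, r₁, r₂), φ_ρ(o; Q) = ρ ((1+ξ_Q(x))/(ρ+ξ_Q(x)))² (r₁ r₂ ϖ_Q(x)/Q(R₁=1, R₂=1)) (y − μ_Q(x)) + ((1−r₁) r₂ / Q(R₁=0, R₂=1))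 ( ξ_Q(x)/(ρ + ξ_Q(x)) − θ_ρ(Q) ). Write ξ = ξ_P, ξ̄ = ξ_{P̄}, μ = μ_P, μ̄ = μ_{P̄}, ϖ = ϖ_P, ϖ̄ = ϖ_{P̄}, θ = θ_ρ(P), θ̄ = θ_ρ(P̄); define S₂f(x) = (μ(x)−μ̄(x))(1+ξ̄(x))² − (ξ(x)−ξ̄(x)) and S₂g(x) = (ξ(x)−ξ̄(x)) ρ/(ρ+ξ̄(x))² − ( ξ(x)/(ρ+ξ(x)) − ξ̄(x)/(ρ+ξ̄(x)) ); and write p₁₁(x) = P(X=x | R₁=1, R₂=1), p₀₁(x) = P(X=x | R₁=0, R₂=1). Then θ̄ − θ = Σ_o φ_ρ(o; P̄)(P̄(o) − P(o)) + R_θ(P̄; P), where R_θ(P̄; P) = (P(R₁=1,R₂=1)/P̄(R₁=1,R₂=1)) Σ_x ( ξ(x)/(ρ+ξ(x)) − ξ̄(x)/(ρ+ξ̄(x)) )(ϖ̄(x) − ϖ(x)) p₁₁(x) + (P(R₁=1,R₂=1)/P̄(R₁=1,R₂=1)) Σ_x ( S₂g(x) + S₂f(x) ρ/(ρ+ξ̄(x))²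 ) ϖ̄(x) p₁₁(x) + ( P(R₁=0,R₂=1)/P̄(R₁=0,R₂=1) − P(R₁=1,R₂=1)/P̄(R₁=1,R₂=1) ) Σ_x ( ξ̄(x)/(ρ+ξ̄(x)) − ξ(x)/(ρ+ξ(x)) ) p₀₁(x) + ( 1 − P(R₁=0,R₂=1)/P̄(R₁=0,R₂=1) )(θ̄ − θ). -/
open Finset

/-- Second-order term `S₂f(x) = (μ(x) − μ̄(x))(1 + ξ̄(x))² − (ξ(x) − ξ̄(x))`
(`p` plays the role of `P`, `q` of `P̄`). -/
noncomputable def S2f {𝒳 : Type*} [Fintype 𝒳] (p q : 𝒳 → Bool → Bool → Bool → ℝ) (x : 𝒳) : ℝ :=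
  (muB p x - muB q x) * (1 + xiB q x) ^ 2 - (xiB p x - xiB q x)

/-- Second-order term
`S₂g(x) = (ξ(x) − ξ̄(x)) ρ/(ρ + ξ̄(x))² − (ξ(x)/(ρ + ξ(x)) − ξ̄(x)/(ρ + ξ̄(x)))`. -/
noncomputable def S2g {𝒳 : Type*} [Fintype 𝒳] (ρ : ℝ) (p q : 𝒳 → Bool → Bool → Bool → ℝ)
    (x : 𝒳) : ℝ :=
  (xiB p x - xiB q x) * ρ / (ρ + xiB q x) ^ 2 -
    (xiB p x / (ρ + xiB p x) - xiB q x / (ρ + xiB q x))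

section
variable {𝒳 : Type*} [Fintype 𝒳] (p : 𝒳 → Bool → Bool → Bool → ℝ)

lemma sumy_pos (hp : RegularB p) (x : 𝒳) (r₁ r₂ : Bool) : 0 < ∑ y : Bool, p x y r₁ r₂ := by
  rw [Fintype.sum_bool]; exact add_pos (hp.2 x true r₁ r₂) (hp.2 x false r₁ r₂)

lemma pRB_pos (hp : RegularB p) (r₁ r₂ : Bool) : 0 < pRB p r₁ r₂ := by
  have : Nonempty 𝒳 := by
    by_contra h
    have := hp.1
    rw [not_nonempty_iff] at h
    rw [Fintype.sum_empty] at this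
    norm_num at this
  exact Finset.sum_pos (fun x _ => sumy_pos p hp x r₁ r₂) Finset.univ_nonempty

lemma muB_mem (hp : RegularB p) (x : 𝒳) : 0 < muB p x ∧ muB p x < 1 := by
  have h := sumy_pos p hp x true true
  constructor
  · exact div_pos (hp.2 x true true true) h
  · rw [muB, div_lt_one h, Fintype.sum_bool]
    nlinarith [hp.2 x false true true]

lemma xiB_pos (hp : RegularB p) (x : 𝒳) : 0 < xiB p x := by
  obtain ⟨h1, h2⟩ := muB_mem p hp x
  exact div_pos h1 (by linarith)

lemma muB_eq (hp : RegularB p) (x : 𝒳) :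
    muB p x * (∑ y : Bool, p x y true true) = p x true true true := by
  rw [muB, div_mul_cancel₀]
  exact (sumy_pos p hp x true true).ne'

lemma L1 {𝒳 : Type*} [Fintype 𝒳] (ρ : ℝ) (hρ : 0 < ρ)
    (p q : 𝒳 → Bool → Bool → Bool → ℝ) (hp : RegularB p) (hq : RegularB q) (x : 𝒳) :
    (∑ y : Bool, ∑ r₁ : Bool, ∑ r₂ : Bool,
        phiB ρ q x y r₁ r₂ * (q x y r₁ r₂ - p x y r₁ r₂)) =
      -(ρ * ((1 + xiB q x) / (ρ + xiB q x)) ^ 2 * varpiB q x *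
          (muB p x - muB q x) * (∑ y : Bool, p x y true true) / pRB q true true) +
        (xiB q x / (ρ + xiB q x) - thetaB ρ q) *
          ((∑ y : Bool, q x y false true) - (∑ y : Bool, p x y false true)) /
            pRB q false true := by
  have hQ11 := (pRB_pos q hq true true).ne'
  have hQ01 := (pRB_pos q hq false true).ne'
  have hxq : 0 < ρ + xiB q x := by linarith [xiB_pos q hq x]
  have hmp := muB_eq p hp x
  have hmq := muB_eq q hq x
  rw [Fintype.sum_bool] at hmp hmq
  simp only [Fintype.sum_bool, phiB, bR, if_pos, if_neg, Bool.false_eq_true,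
    ite_true, ite_false]
  norm_num
  linear_combination (ρ * ((1 + xiB q x) / (ρ + xiB q x)) ^ 2 * varpiB q x /
    pRB q true true) * (hmp - hmq)
end

lemma theta_mul {𝒳 : Type*} [Fintype 𝒳] (ρ : ℝ)
    (q : 𝒳 → Bool → Bool → Bool → ℝ) (hq : RegularB q) :
    thetaB ρ q * pRB q false true =
      ∑ x : 𝒳, (xiB q x / (ρ + xiB q x)) * (∑ y : Bool, q x y false true) := by
  rw [thetaB, Finset.sum_mul]
  refine Finset.sum_congr rfl fun x _ => ?_
  rw [pXB, mul_assoc, div_mul_cancel₀ _ (pRB_pos q hq false true).ne']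

lemma varpi_mul {𝒳 : Type*} [Fintype 𝒳]
    (p : 𝒳 → Bool → Bool → Bool → ℝ) (hp : RegularB p) (x : 𝒳) :
    varpiB p x * pXB p true true x = pXB p false true x := by
  rw [varpiB, div_mul_cancel₀]
  exact ne_of_gt (div_pos (sumy_pos p hp x true true) (pRB_pos p hp true true))

lemma pX_mul {𝒳 : Type*} [Fintype 𝒳]
    (p : 𝒳 → Bool → Bool → Bool → ℝ) (hp : RegularB p) (r₁ r₂ : Bool) (x : 𝒳) :
    pXB p r₁ r₂ x * pRB p r₁ r₂ = ∑ y : Bool, p x y r₁ r₂ := by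
  rw [pXB, div_mul_cancel₀ _ (pRB_pos p hp r₁ r₂).ne']

/-- **Von Mises expansion in the binary-outcome case (Corollary 2 of the discussion).**
For `ρ > 0` and regular binary-outcome observed-data distributions `p = P` and `q = P̄`,
`θ̄ − θ = ∑_o φ_ρ(o; P̄)(P̄(o) − P(o)) + R_θ(P̄; P)` with the stated remainder. -/
theorem stmt11
    {𝒳 : Type*} [Fintype 𝒳] (ρ : ℝ) (hρ : 0 < ρ)
    (p q : 𝒳 → Bool → Bool → Bool → ℝ) (hp : RegularB p) (hq : RegularB q) :
    thetaB ρ q - thetaB ρ p =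
      (∑ x : 𝒳, ∑ y : Bool, ∑ r₁ : Bool, ∑ r₂ : Bool,
        phiB ρ q x y r₁ r₂ * (q x y r₁ r₂ - p x y r₁ r₂)) +
      ((pRB p true true / pRB q true true) *
          (∑ x : 𝒳, (xiB p x / (ρ + xiB p x) - xiB q x / (ρ + xiB q x)) *
            (varpiB q x - varpiB p x) * pXB p true true x) +
        (pRB p true true / pRB q true true) *
          (∑ x : 𝒳, (S2g ρ p q x + S2f p q x * ρ / (ρ + xiB q x) ^ 2) *
            varpiB q x * pXB p true true x) +
        (pRB p false true / pRB q false true - pRB p true true / pRB q true true) *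
          (∑ x : 𝒳, (xiB q x / (ρ + xiB q x) - xiB p x / (ρ + xiB p x)) *
            pXB p false true x) +
        (1 - pRB p false true / pRB q false true) * (thetaB ρ q - thetaB ρ p)) := by
  have hQ11 : pRB q true true ≠ 0 := (pRB_pos q hq true true).ne'
  have hxq : ∀ x : 𝒳, ρ + xiB q x ≠ 0 := fun x => by linarith [xiB_pos q hq x]
  have hxp : ∀ x : 𝒳, ρ + xiB p x ≠ 0 := fun x => by linarith [xiB_pos p hp x]
  have hQ01 : pRB q false true ≠ 0 := (pRB_pos q hq false true).ne'
  have hP11 : pRB p true true ≠ 0 := (pRB_pos p hp true true).ne'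
  have hP01 : pRB p false true ≠ 0 := (pRB_pos p hp false true).ne'
  -- abbreviations (as sum values)
  set Sa : ℝ := ∑ x : 𝒳, ρ * ((1 + xiB q x) / (ρ + xiB q x)) ^ 2 * varpiB q x *
      (muB p x - muB q x) * (∑ y : Bool, p x y true true) with hSa
  set Sb : ℝ := ∑ x : 𝒳, (xiB q x / (ρ + xiB q x)) * (∑ y : Bool, p x y false true) with hSb
  set Sc : ℝ := ∑ x : 𝒳, (xiB p x / (ρ + xiB p x) - xiB q x / (ρ + xiB q x)) *
      (varpiB q x - varpiB p x) * pXB p true true x with hSc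
  set Sd : ℝ := ∑ x : 𝒳, (S2g ρ p q x + S2f p q x * ρ / (ρ + xiB q x) ^ 2) *
      varpiB q x * pXB p true true x with hSd
  set Se : ℝ := ∑ x : 𝒳, (xiB q x / (ρ + xiB q x) - xiB p x / (ρ + xiB p x)) *
      pXB p false true x with hSe
  -- Step 1: the big sum
  have hbig : (∑ x : 𝒳, ∑ y : Bool, ∑ r₁ : Bool, ∑ r₂ : Bool,
        phiB ρ q x y r₁ r₂ * (q x y r₁ r₂ - p x y r₁ r₂)) =
      -(Sa / pRB q true true) +
        (thetaB ρ q * pRB p false true - Sb) / pRB q false true := by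
    rw [Finset.sum_congr rfl fun x _ => L1 ρ hρ p q hp hq x]
    rw [Finset.sum_add_distrib]
    congr 1
    · rw [hSa, Finset.sum_div, ← Finset.sum_neg_distrib]
    · rw [← Finset.sum_div]
      congr 1
      have hθ := theta_mul ρ q hq
      have h1 : (∑ x : 𝒳, (xiB q x / (ρ + xiB q x) - thetaB ρ q) *
          ((∑ y : Bool, q x y false true) - (∑ y : Bool, p x y false true))) =
          (∑ x : 𝒳, (xiB q x / (ρ + xiB q x)) * (∑ y : Bool, q x y false true)) -
          Sb - thetaB ρ q * pRB q false true + thetaB ρ q * pRB p false true := by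
        rw [hSb, pRB, pRB, Finset.mul_sum, Finset.mul_sum]
        rw [← Finset.sum_sub_distrib, ← Finset.sum_sub_distrib, ← Finset.sum_add_distrib]
        exact Finset.sum_congr rfl fun x _ => by ring
      rw [h1, ← hθ]
      ring
  -- Step 2: Sa = P11 * (Sc + Sd - Se)
  have hSaEq : Sa = pRB p true true * (Sc + Sd - Se) := by
    rw [hSa, hSc, hSd, hSe, ← Finset.sum_add_distrib, ← Finset.sum_sub_distrib,
      Finset.mul_sum]
    refine Finset.sum_congr rfl fun x _ => ?_
    have hϖ := varpi_mul p hp x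
    have hpX := pX_mul p hp true true x
    rw [← hpX, ← hϖ]
    rw [S2g, S2f]
    field_simp
    ring
  -- Step 3: Sb = P01 * (Se + θ)
  have hSbEq : Sb = pRB p false true * (Se + thetaB ρ p) := by
    rw [hSb, thetaB, hSe, ← Finset.sum_add_distrib, Finset.mul_sum]
    refine Finset.sum_congr rfl fun x _ => ?_
    rw [← pX_mul p hp false true x]
    ring
  rw [hbig, hSaEq, hSbEq]
  field_simp
  ring
end

section
/- Fix ρ > 0 and let P be a regular binary-outcome observed-data distribution. With μ(x) = P(Y=1 | X=x, R₁=1, R₂=1), ξ(x) = μ(x)/(1−μ(x)), ϖ(x) = P(X=x | R₁=0, R₂=1)/P(X=x | R₁=1, R₂=1), θ = E_P( ξ(X)/(ρ + ξ(X)) | R₁=0, R₂=1 ), and φ(o; P) = ρ ((1+ξ(x))/(ρ+ξ(x)))² (r₁ r₂ ϖ(x)/P(R₁=1, R₂=1)) (y − μ(x)) + ((1−r₁) r₂ / P(R₁=0, R₂=1)) ( ξ(x)/(ρ + ξ(x)) − θ ) for o = (x, y, r₁, r₂), one has E_P[φ(O; P)] = 0. -/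
open Finset

/-- **The binary-outcome influence function has mean zero.**
For `ρ > 0` and a regular binary-outcome observed-data distribution `P`, the influence
function `φ_ρ(·; P)` satisfies `E_P[φ_ρ(O; P)] = 0`. -/
theorem stmt12
    {𝒳 : Type*} [Fintype 𝒳] (ρ : ℝ) (hρ : 0 < ρ)
    (p : 𝒳 → Bool → Bool → Bool → ℝ) (hp : RegularB p) :
    (∑ x : 𝒳, ∑ y : Bool, ∑ r₁ : Bool, ∑ r₂ : Bool,
      p x y r₁ r₂ * phiB ρ p x y r₁ r₂) = 0 := by
  obtain ⟨hsum, hpos⟩ := hp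
  have hne : Nonempty 𝒳 := by
    by_contra h
    rw [not_nonempty_iff] at h
    rw [Finset.univ_eq_empty, Finset.sum_empty] at hsum
    norm_num at hsum
  have hS : ∀ x r₁ r₂, 0 < ∑ y : Bool, p x y r₁ r₂ := fun x r₁ r₂ =>
    Finset.sum_pos (fun y _ => hpos x y r₁ r₂) univ_nonempty
  have hR : ∀ r₁ r₂, 0 < pRB p r₁ r₂ := fun r₁ r₂ =>
    Finset.sum_pos (fun x _ => hS x r₁ r₂) univ_nonempty
  have hmu : ∀ x, muB p x * (p x true true true + p x false true true) = p x true true true := by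
    intro x
    have h := (hS x true true).ne'
    rw [Fintype.sum_bool] at h
    rw [muB, Fintype.sum_bool, div_mul_cancel₀ _ h]
  have hpXsum : (∑ x, pXB p false true x) = 1 := by
    simp only [pXB]
    rw [← Finset.sum_div]
    exact div_self (hR false true).ne'
  have key : ∀ x, (∑ y : Bool, ∑ r₁ : Bool, ∑ r₂ : Bool, p x y r₁ r₂ * phiB ρ p x y r₁ r₂)
      = (xiB p x / (ρ + xiB p x) - thetaB ρ p) * pXB p false true x := by
    intro x
    have hz : p x true true true * (1 - muB p x) + p x false true true * (0 - muB p x) = 0 := by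
      linear_combination -hmu x
    have hL : (p x true false true + p x false false true) / pRB p false true
        = pXB p false true x := by rw [pXB, Fintype.sum_bool]
    simp only [Fintype.sum_bool, phiB, bR, if_true, reduceIte, Bool.false_eq_true]
    linear_combination (ρ * ((1 + xiB p x) / (ρ + xiB p x)) ^ 2 *
        (varpiB p x / pRB p true true)) * hz +
      (xiB p x / (ρ + xiB p x) - thetaB ρ p) * hL
  rw [Finset.sum_congr rfl (fun x _ => key x)]
  simp only [sub_mul]
  rw [Finset.sum_sub_distrib, ← Finset.mul_sum, hpXsum, mul_one]
  have hth : ∑ x, (xiB p x / (ρ + xiB p x)) * pXB p false true x = thetaB ρ p := rfl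
  rw [hth, sub_self]
end

section
/- Fix ρ > 0 and let P and P̄ be two regular binary-outcome observed-data distributions, with nuisances μ, ξ, ϖ, θ under P and μ̄, ξ̄, ϖ̄, θ̄ under P̄ (as defined in the context), and let φ_ρ(·; P̄) be the influence function computed under P̄: φ_ρ(o; P̄) = ρ ((1+ξ̄(x))/(ρ+ξ̄(x)))² (r₁ r₂ ϖ̄(x)/P̄(R₁=1, R₂=1)) (y − μ̄(x)) + ((1−r₁) r₂ / P̄(R₁=0, R₂=1)) ( ξ̄(x)/(ρ + ξ̄(x)) − θ̄ ). Then Σ_o φ_ρ(o; P̄) P(o) = (P(R₁=1,R₂=1)/P̄(R₁=1,R₂=1)) Σ_x (ρ/(ρ+ξ̄(x))²) (1+ξ̄(x))² (μ(x) − μ̄(x)) ϖ̄(x) P(X=x | R₁=1, R₂=1) + (P(R₁=0,R₂=1)/P̄(R₁=0,R₂=1)) Σ_x ( ξ̄(x)/(ρ+ξ̄(x)) − θ̄ ) P(X=x | R₁=0, R₂=1). -/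
open Finset

set_option maxHeartbeats 1000000 in
/-- **Expectation of the `P̄`-influence function under `P` (appendix computation).**
For `ρ > 0` and regular binary-outcome observed-data distributions `p = P` and `q = P̄`,
`∑_o φ_ρ(o; P̄) P(o)
  = (P(R₁=1,R₂=1)/P̄(R₁=1,R₂=1)) ∑_x (ρ/(ρ+ξ̄(x))²)(1+ξ̄(x))²(μ(x)−μ̄(x)) ϖ̄(x) P(X=x | R₁=1,R₂=1)
    + (P(R₁=0,R₂=1)/P̄(R₁=0,R₂=1)) ∑_x (ξ̄(x)/(ρ+ξ̄(x)) − θ̄) P(X=x | R₁=0,R₂=1)`. -/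
theorem stmt13
    {𝒳 : Type*} [Fintype 𝒳] (ρ : ℝ) (hρ : 0 < ρ)
    (p q : 𝒳 → Bool → Bool → Bool → ℝ) (hp : RegularB p) (hq : RegularB q) :
    (∑ x : 𝒳, ∑ y : Bool, ∑ r₁ : Bool, ∑ r₂ : Bool,
      phiB ρ q x y r₁ r₂ * p x y r₁ r₂) =
      (pRB p true true / pRB q true true) *
        (∑ x : 𝒳, (ρ / (ρ + xiB q x) ^ 2) * (1 + xiB q x) ^ 2 * (muB p x - muB q x) *
          varpiB q x * pXB p true true x) +
      (pRB p false true / pRB q false true) *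
        (∑ x : 𝒳, (xiB q x / (ρ + xiB q x) - thetaB ρ q) * pXB p false true x) := by
  obtain ⟨hp1, hp2⟩ := hp
  obtain ⟨hq1, hq2⟩ := hq
  have hne : Nonempty 𝒳 := by
    by_contra h
    rw [not_nonempty_iff] at h
    simp [Finset.univ_eq_empty] at hp1
  have hR : ∀ (r : 𝒳 → Bool → Bool → Bool → ℝ),
      (∀ (x : 𝒳) (y r₁ r₂ : Bool), 0 < r x y r₁ r₂) → ∀ r₁ r₂, 0 < pRB r r₁ r₂ := by
    intro r hr r₁ r₂
    refine Finset.sum_pos (fun x _ => Finset.sum_pos (fun y _ => hr x y r₁ r₂) ?_) ?_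
    · simp
    · exact Finset.univ_nonempty
  have hPtt := (hR p hp2 true true).ne'
  have hPft := (hR p hp2 false true).ne'
  have hQtt := (hR q hq2 true true).ne'
  have hQft := (hR q hq2 false true).ne'
  rw [Finset.mul_sum, Finset.mul_sum, ← Finset.sum_add_distrib]
  refine Finset.sum_congr rfl (fun x _ => ?_)
  have hs : p x true true true + p x false true true ≠ 0 := by
    have := hp2 x true true true; have := hp2 x false true true; linarith
  have hmq0 : 0 < muB q x := by
    have h1 := hq2 x true true true; have h2 := hq2 x false true true
    unfold muB
    rw [Fintype.sum_bool]
    positivity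
  have hmq1 : muB q x < 1 := by
    have h1 := hq2 x true true true; have h2 := hq2 x false true true
    unfold muB
    rw [Fintype.sum_bool, div_lt_one (by linarith)]
    linarith
  have hxi : 0 < xiB q x := div_pos hmq0 (by linarith)
  have hrx : ρ + xiB q x ≠ 0 := by linarith
  have hmp : muB p x = p x true true true / (p x true true true + p x false true true) := by
    unfold muB; rw [Fintype.sum_bool]
  rw [hmp]
  simp only [phiB, pXB, Fintype.sum_bool, bR, if_true, if_false, Bool.false_eq_true]
  field_simp
  ring
end

section
/- Fix ρ > 0 and let P and P̄ be two regular binary-outcome observed-data distributions, with nuisances μ, ξ, ϖ, θ under P and μ̄, ξ̄, ϖ̄, θ̄ under P̄, and influence function φ_ρ(o; P̄) = ρ ((1+ξ̄(x))/(ρ+ξ̄(x)))² (r₁ r₂ ϖ̄(x)/P̄(R₁=1, R₂=1)) (y − μ̄(x)) + ((1−r₁) r₂ / P̄(R₁=0, R₂=1)) ( ξ̄(x)/(ρ + ξ̄(x)) − θ̄ ). Then θ̄ − θ − Σ_o φ_ρ(o; P̄)(P̄(o) − P(o)) = (P(R₁=1,R₂=1)/P̄(R₁=1,R₂=1)) Σ_x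 (ρ/(ρ+ξ̄(x))²) (1+ξ̄(x))² (μ(x) − μ̄(x)) ϖ̄(x) P(X=x | R₁=1, R₂=1) + (P(R₁=0,R₂=1)/P̄(R₁=0,R₂=1)) Σ_x ( ξ̄(x)/(ρ+ξ̄(x)) − θ ) P(X=x | R₁=0, R₂=1) + ( 1 − P(R₁=0,R₂=1)/P̄(R₁=0,R₂=1) ) (θ̄ − θ). -/
open Finset

/-- Auxiliary scalar identity used pointwise in `x`. -/
lemma keyAux (ρ ξ ϖ t q11 q01 p11 p01 a b a' b' c d c' d' : ℝ)
    (hq11 : q11 ≠ 0) (hq01 : q01 ≠ 0) (hp11 : p11 ≠ 0) (hp01 : p01 ≠ 0)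
    (hab : a + b ≠ 0) (hab' : a' + b' ≠ 0) (hρξ : ρ + ξ ≠ 0) :
    ρ * ((1 + ξ) / (ρ + ξ)) ^ 2 * (ϖ / q11) * ((1 - a / (a + b)) * (a - a'))
      + ρ * ((1 + ξ) / (ρ + ξ)) ^ 2 * (ϖ / q11) * ((0 - a / (a + b)) * (b - b'))
      + (1 / q01) * (ξ / (ρ + ξ) - t) * ((c - c') + (d - d'))
    = -((p11 / q11) * ((ρ / (ρ + ξ) ^ 2) * (1 + ξ) ^ 2 * (a' / (a' + b') - a / (a + b)) * ϖ *
          ((a' + b') / p11)))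
      + (ξ / (ρ + ξ)) * ((c + d) / q01)
      - (p01 / q01) * ((ξ / (ρ + ξ)) * ((c' + d') / p01))
      - t * (((c + d) - (c' + d')) / q01) := by
  field_simp
  ring

set_option maxHeartbeats 2000000 in
/-- **Decomposition of the remainder (appendix, equations (5)–(6) of the discussion).**
For `ρ > 0` and regular binary-outcome observed-data distributions `p = P` and `q = P̄`,
`θ̄ − θ − ∑_o φ_ρ(o; P̄)(P̄(o) − P(o))
  = (P(R₁=1,R₂=1)/P̄(R₁=1,R₂=1)) ∑_x (ρ/(ρ+ξ̄(x))²)(1+ξ̄(x))²(μ(x)−μ̄(x)) ϖ̄(x) P(X=x | R₁=1,R₂=1)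
    + (P(R₁=0,R₂=1)/P̄(R₁=0,R₂=1)) ∑_x (ξ̄(x)/(ρ+ξ̄(x)) − θ) P(X=x | R₁=0,R₂=1)
    + (1 − P(R₁=0,R₂=1)/P̄(R₁=0,R₂=1)) (θ̄ − θ)`. -/
theorem stmt16
    {𝒳 : Type*} [Fintype 𝒳] (ρ : ℝ) (hρ : 0 < ρ)
    (p q : 𝒳 → Bool → Bool → Bool → ℝ) (hp : RegularB p) (hq : RegularB q) :
    thetaB ρ q - thetaB ρ p -
      (∑ x : 𝒳, ∑ y : Bool, ∑ r₁ : Bool, ∑ r₂ : Bool,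
        phiB ρ q x y r₁ r₂ * (q x y r₁ r₂ - p x y r₁ r₂)) =
      (pRB p true true / pRB q true true) *
        (∑ x : 𝒳, (ρ / (ρ + xiB q x) ^ 2) * (1 + xiB q x) ^ 2 * (muB p x - muB q x) *
          varpiB q x * pXB p true true x) +
      (pRB p false true / pRB q false true) *
        (∑ x : 𝒳, (xiB q x / (ρ + xiB q x) - thetaB ρ p) * pXB p false true x) +
      (1 - pRB p false true / pRB q false true) * (thetaB ρ q - thetaB ρ p) := by
  obtain ⟨hp1, hp2⟩ := hp
  obtain ⟨hq1, hq2⟩ := hq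
  have hne : Nonempty 𝒳 := by
    rcases isEmpty_or_nonempty 𝒳 with h | h
    · rw [Finset.univ_eq_empty, Finset.sum_empty] at hp1; norm_num at hp1
    · exact h
  -- positivity of the summed quantities
  have hA : ∀ (r : 𝒳 → Bool → Bool → Bool → ℝ), (∀ x y r₁ r₂, 0 < r x y r₁ r₂) →
      ∀ x r₁ r₂, (0 : ℝ) < ∑ y : Bool, r x y r₁ r₂ := by
    intro r hr x r₁ r₂
    rw [Fintype.sum_bool]
    have := hr x true r₁ r₂; have := hr x false r₁ r₂; linarith
  have hR : ∀ (r : 𝒳 → Bool → Bool → Bool → ℝ), (∀ x y r₁ r₂, 0 < r x y r₁ r₂) →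
      ∀ r₁ r₂, (0 : ℝ) < pRB r r₁ r₂ := by
    intro r hr r₁ r₂
    exact Finset.sum_pos (fun x _ => hA r hr x r₁ r₂) Finset.univ_nonempty
  have hq11 : pRB q true true ≠ 0 := ne_of_gt (hR q hq2 true true)
  have hq01 : pRB q false true ≠ 0 := ne_of_gt (hR q hq2 false true)
  have hp11 : pRB p true true ≠ 0 := ne_of_gt (hR p hp2 true true)
  have hp01 : pRB p false true ≠ 0 := ne_of_gt (hR p hp2 false true)
  have hAq : ∀ x, (∑ y : Bool, q x y true true) ≠ 0 := fun x => ne_of_gt (hA q hq2 x true true)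
  have hAp : ∀ x, (∑ y : Bool, p x y true true) ≠ 0 := fun x => ne_of_gt (hA p hp2 x true true)
  -- the odds are positive, hence `ρ + ξ̄(x) ≠ 0`
  have hxi : ∀ x, 0 < xiB q x := by
    intro x
    have h0 : 0 < muB q x := div_pos (hq2 x true true true) (hA q hq2 x true true)
    have h1 : muB q x < 1 := by
      rw [muB, div_lt_one (hA q hq2 x true true), Fintype.sum_bool]
      have := hq2 x false true true; linarith
    exact div_pos h0 (by linarith)
  have hρξ : ∀ x, ρ + xiB q x ≠ 0 := fun x => ne_of_gt (by have := hxi x; linarith)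
  -- pointwise identity for the inner sum over (y, r₁, r₂)
  have key : ∀ x : 𝒳,
      (∑ y : Bool, ∑ r₁ : Bool, ∑ r₂ : Bool,
          phiB ρ q x y r₁ r₂ * (q x y r₁ r₂ - p x y r₁ r₂))
      = -((pRB p true true / pRB q true true) *
            ((ρ / (ρ + xiB q x) ^ 2) * (1 + xiB q x) ^ 2 * (muB p x - muB q x) *
              varpiB q x * pXB p true true x))
        + (xiB q x / (ρ + xiB q x)) * pXB q false true x
        - (pRB p false true / pRB q false true) *
            ((xiB q x / (ρ + xiB q x)) * pXB p false true x)
        - thetaB ρ q *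
            (((∑ y : Bool, q x y false true) - (∑ y : Bool, p x y false true)) /
              pRB q false true) := by
    intro x
    have e1 : q x true true true + q x false true true ≠ 0 := by
      have := hAq x; rwa [Fintype.sum_bool] at this
    have e2 : p x true true true + p x false true true ≠ 0 := by
      have := hAp x; rwa [Fintype.sum_bool] at this
    simp only [Fintype.sum_bool, phiB, bR, pXB, muB]
    norm_num
    linear_combination keyAux ρ (xiB q x) (varpiB q x) (thetaB ρ q)
      (pRB q true true) (pRB q false true) (pRB p true true) (pRB p false true)
      (q x true true true) (q x false true true) (p x true true true) (p x false true true)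
      (q x true false true) (q x false false true) (p x true false true) (p x false false true)
      hq11 hq01 hp11 hp01 e1 e2 (hρξ x)
  rw [Finset.sum_congr rfl fun x _ => key x]
  have hsplit :
      (∑ x : 𝒳,
        (-((pRB p true true / pRB q true true) *
            ((ρ / (ρ + xiB q x) ^ 2) * (1 + xiB q x) ^ 2 * (muB p x - muB q x) *
              varpiB q x * pXB p true true x))
        + (xiB q x / (ρ + xiB q x)) * pXB q false true x
        - (pRB p false true / pRB q false true) *
            ((xiB q x / (ρ + xiB q x)) * pXB p false true x)
        - thetaB ρ q *
            (((∑ y : Bool, q x y false true) - (∑ y : Bool, p x y false true)) /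
              pRB q false true)))
      = -((pRB p true true / pRB q true true) *
            (∑ x : 𝒳, (ρ / (ρ + xiB q x) ^ 2) * (1 + xiB q x) ^ 2 * (muB p x - muB q x) *
              varpiB q x * pXB p true true x))
        + thetaB ρ q
        - (pRB p false true / pRB q false true) *
            (∑ x : 𝒳, (xiB q x / (ρ + xiB q x)) * pXB p false true x)
        - thetaB ρ q *
            ((pRB q false true - pRB p false true) / pRB q false true) := by
    rw [Finset.sum_sub_distrib, Finset.sum_sub_distrib, Finset.sum_add_distrib,
      Finset.sum_neg_distrib, ← Finset.mul_sum, ← Finset.mul_sum, ← Finset.mul_sum,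
      ← Finset.sum_div, Finset.sum_sub_distrib]
    rfl
  rw [hsplit]
  have hsum1 : (∑ x : 𝒳, pXB p false true x) = 1 := by
    simp only [pXB]
    rw [← Finset.sum_div, ← pRB, div_self hp01]
  have hrhs : (∑ x : 𝒳, (xiB q x / (ρ + xiB q x) - thetaB ρ p) * pXB p false true x)
      = (∑ x : 𝒳, (xiB q x / (ρ + xiB q x)) * pXB p false true x) - thetaB ρ p := by
    have h2 : (∑ x : 𝒳, (xiB q x / (ρ + xiB q x) - thetaB ρ p) * pXB p false true x)
        = (∑ x : 𝒳, (xiB q x / (ρ + xiB q x)) * pXB p false true x)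
          - thetaB ρ p * ∑ x : 𝒳, pXB p false true x := by
      rw [Finset.mul_sum, ← Finset.sum_sub_distrib]
      exact Finset.sum_congr rfl fun x _ => by ring
    rw [h2, hsum1, mul_one]
  rw [hrhs]
  set S1 := ∑ x : 𝒳, (ρ / (ρ + xiB q x) ^ 2) * (1 + xiB q x) ^ 2 * (muB p x - muB q x) *
      varpiB q x * pXB p true true x
  set s := ∑ x : 𝒳, (xiB q x / (ρ + xiB q x)) * pXB p false true x
  field_simp
  ring
end
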